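/- arXiv:2502.02058 — 4 statements merged into one kernel-verified Lean document; each statement's English description precedes it below -/
import Mathlib

section
/- For every ℓ ≥ 1 there exist real constants c₀, ..., c_ℓ (depending only on ℓ, m, n) such that for all Schwartz symmetric m-tensor fields v on ℝⁿ, δ^ℓ d^ℓ v = Σ_{i=0}^{ℓ} cᵢ · Δ̄^{ℓ-i} (dδ)^i v, where Δ̄ is the componentwise Laplacian. -/
open MeasureTheory
open scoped RealInnerProductSpace
noncomputable section

abbrev E (n : ℕ) := EuclideanSpace ℝ (Fin n)

/-- Tensor field of order `m` on ℝⁿ, given by its components. -/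
abbrev TF (n m : ℕ) := E n → (Fin m → Fin n) → ℝ

/-- Partial derivative in the `i`-th coordinate direction. -/
def pd {n : ℕ} (i : Fin n) (g : E n → ℝ) (x : E n) : ℝ :=
  fderiv ℝ g x (EuclideanSpace.single i 1)

/-- All components of the tensor field are Schwartz functions. -/
def IsSchwartzTF {n m : ℕ} (f : TF n m) : Prop :=
  ∀ idx, ∃ g : SchwartzMap (E n) ℝ, (fun x => f x idx) = ⇑g

/-- The tensor field is symmetric. -/
def IsSymTF {n m : ℕ} (f : TF n m) : Prop :=
  ∀ (x : E n) (σ : Equiv.Perm (Fin m)) (idx : Fin m → Fin n), f x (idx ∘ σ) = f x idx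

/-- Divergence δ of a tensor field (contraction of the derivative in the last index). -/
def div' {n m : ℕ} : TF n m → TF n (m - 1) :=
  match m with
  | 0 => fun _ => fun _ _ => 0
  | _ + 1 => fun u x idx => ∑ i : Fin n, pd i (fun y => u y (Fin.snoc idx i)) x

/-- Iterated divergence δ^k. -/
def divIter {n m : ℕ} : (k : ℕ) → TF n m → TF n (m - k)
  | 0, u => u
  | k + 1, u => div' (divIter k u)

/-- Symmetrization of an `m`-tensor (average over permutations of the indices). -/
def symz {n m : ℕ} (T : (Fin m → Fin n) → ℝ) : (Fin m → Fin n) → ℝ :=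
  fun idx => (m.factorial : ℝ)⁻¹ * ∑ σ : Equiv.Perm (Fin m), T (idx ∘ σ)

/-- Symmetrized derivative (inner differentiation) d. -/
def dsym {n m : ℕ} (v : TF n m) : TF n (m + 1) :=
  fun x => symz (fun idx => pd (idx (Fin.last m)) (fun y => v y (idx ∘ Fin.castSucc)) x)

/-- Iterated symmetrized derivative d^k. -/
def dIter {n m : ℕ} : (k : ℕ) → TF n m → TF n (m + k)
  | 0, v => v
  | k + 1, v => dsym (dIter k v)

/-- Componentwise Laplacian. -/
def lap {n m : ℕ} (u : TF n m) : TF n m :=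
  fun x idx => ∑ i : Fin n, pd i (fun y => pd i (fun z => u z idx) y) x

/-- Full contraction of an `m`-tensor field with a family of `m` vectors
(equivalently, with the symmetric product of those vectors when the field is symmetric). -/
def contr {n m : ℕ} (f : TF n m) (v : Fin m → E n) (x : E n) : ℝ :=
  ∑ idx : Fin m → Fin n, f x idx * ∏ j, v j (idx j)

/-- Contraction with a vector `w` in the last index. -/
def jv {n m : ℕ} (w : E n) : TF n m → TF n (m - 1) :=
  match m with
  | 0 => fun _ => fun _ _ => 0
  | _ + 1 => fun u x idx => ∑ i : Fin n, w i * u x (Fin.snoc idx i)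

/-- Iterated contraction with `w` in the last `k` indices. -/
def jvIter {n m : ℕ} (w : E n) : (k : ℕ) → TF n m → TF n (m - k)
  | 0, u => u
  | k + 1, u => jv w (jvIter w k u)

/-- Integral of a scalar function over the hyperplane `{x : ⟪x, ω⟫ = p}`. -/
def hypInt {n : ℕ} (h : E n → ℝ) (ω : E n) (p : ℝ) : ℝ :=
  ∫ y : ((ℝ ∙ ω)ᗮ : Submodule ℝ (E n)), h (p • ω + (y : E n))

/-- The transversal Radon transform 𝒯^m of a symmetric m-tensor field. -/
def TRT {n m : ℕ} (g : TF n m) (ω : E n) (p : ℝ) : ℝ :=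
  hypInt (contr g (fun _ => ω)) ω p

def SC {n : ℕ} (h : E n → ℝ) : Prop := ∃ g : SchwartzMap (E n) ℝ, h = ⇑g

lemma SC.contDiff {n : ℕ} {h : E n → ℝ} (hs : SC h) : ContDiff ℝ ((⊤:ℕ∞):WithTop ℕ∞) h := by
  obtain ⟨g, rfl⟩ := hs; exact g.smooth ⊤

lemma SC.differentiable {n : ℕ} {h : E n → ℝ} (hs : SC h) : Differentiable ℝ h :=
  hs.contDiff.differentiable (by simp)

lemma SC.pd {n : ℕ} {h : E n → ℝ} (hs : SC h) (i : Fin n) : SC (pd i h) := by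
  obtain ⟨g, rfl⟩ := hs
  exact ⟨LineDeriv.lineDerivOp (EuclideanSpace.single i (1:ℝ) : E n) g, rfl⟩

lemma pd_second {n : ℕ} {h : E n → ℝ} (hd : ContDiff ℝ ((⊤:ℕ∞):WithTop ℕ∞) h) (a b : Fin n) (x : E n) :
    pd a (pd b h) x =
      fderiv ℝ (fderiv ℝ h) x (EuclideanSpace.single a 1) (EuclideanSpace.single b 1) := by
  have hdf : DifferentiableAt ℝ (fderiv ℝ h) x :=
    (((hd.fderiv_right (m := (⊤:ℕ∞)) (by simp))).differentiable (by simp)).differentiableAt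
  have : pd b h = fun y => (fderiv ℝ h y) ((fun _ => EuclideanSpace.single b 1) y) := rfl
  rw [show pd a (pd b h) x = fderiv ℝ (fun y => (fderiv ℝ h y)
      ((fun _ : E n => EuclideanSpace.single b (1:ℝ)) y)) x (EuclideanSpace.single a 1) from rfl,
    fderiv_clm_apply hdf (differentiableAt_const _)]
  simp

lemma pd_comm {n : ℕ} {h : E n → ℝ} (hs : ContDiff ℝ ((⊤:ℕ∞):WithTop ℕ∞) h) (a b : Fin n) :
    pd a (pd b h) = pd b (pd a h) := by
  funext x
  have hsym : IsSymmSndFDerivAt ℝ h x :=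
    hs.contDiffAt.isSymmSndFDerivAt (by
      have h2 : ((2:ℕ∞) : WithTop ℕ∞) ≤ ((⊤:ℕ∞) : WithTop ℕ∞) := WithTop.coe_le_coe.mpr le_top
      simpa using h2)
  rw [pd_second hs, pd_second hs, hsym.eq]

lemma pd_congr {n : ℕ} {h₁ h₂ : E n → ℝ} (i : Fin n) (h : h₁ = h₂) : pd i h₁ = pd i h₂ := by
  rw [h]

lemma pd_sum {n : ℕ} {ι : Type*} (s : Finset ι) (h : ι → E n → ℝ)
    (hd : ∀ k ∈ s, Differentiable ℝ (h k)) (i : Fin n) :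
    pd i (fun y => ∑ k ∈ s, h k y) = fun x => ∑ k ∈ s, pd i (h k) x := by
  funext x
  have : fderiv ℝ (fun y => ∑ k ∈ s, h k y) x = ∑ k ∈ s, fderiv ℝ (h k) x :=
    fderiv_fun_sum (fun k hk => (hd k hk).differentiableAt)
  simp only [pd, this, ContinuousLinearMap.sum_apply]

lemma pd_const_mul {n : ℕ} {h : E n → ℝ} (hd : Differentiable ℝ h) (c : ℝ) (i : Fin n) :
    pd i (fun y => c * h y) = fun x => c * pd i h x := by
  funext x
  simp only [pd, fderiv_const_mul hd.differentiableAt c, ContinuousLinearMap.smul_apply,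
    smul_eq_mul]

lemma pd_add {n : ℕ} {h₁ h₂ : E n → ℝ} (hd₁ : Differentiable ℝ h₁) (hd₂ : Differentiable ℝ h₂)
    (i : Fin n) : pd i (fun y => h₁ y + h₂ y) = fun x => pd i h₁ x + pd i h₂ x := by
  funext x
  simp only [pd, fderiv_fun_add hd₁.differentiableAt hd₂.differentiableAt,
    ContinuousLinearMap.add_apply]

lemma SC.sum {n : ℕ} {ι : Type*} (s : Finset ι) {h : ι → E n → ℝ}
    (hs : ∀ k ∈ s, SC (h k)) : SC (fun y => ∑ k ∈ s, h k y) := by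
  classical
  induction s using Finset.induction with
  | empty => exact ⟨0, by funext y; simp⟩
  | @insert a s ha ih =>
      obtain ⟨g, hg⟩ := hs a (Finset.mem_insert_self a s)
      obtain ⟨G, hG⟩ := ih (fun k hk => hs k (Finset.mem_insert_of_mem hk))
      refine ⟨g + G, ?_⟩
      funext y
      rw [Finset.sum_insert ha]
      have h1 : h a y = g y := congrFun hg y
      have h2 : (∑ k ∈ s, h k y) = G y := congrFun hG y
      simp [h1, h2]

lemma SC.const_mul {n : ℕ} {h : E n → ℝ} (hs : SC h) (c : ℝ) : SC (fun y => c * h y) := by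
  obtain ⟨g, rfl⟩ := hs
  exact ⟨c • g, by funext y; simp⟩

lemma SC.add {n : ℕ} {h₁ h₂ : E n → ℝ} (hs₁ : SC h₁) (hs₂ : SC h₂) :
    SC (fun y => h₁ y + h₂ y) := by
  obtain ⟨g₁, rfl⟩ := hs₁; obtain ⟨g₂, rfl⟩ := hs₂
  exact ⟨g₁ + g₂, by funext y; simp⟩

/-! ### recast -/

def recast {n a b : ℕ} (h : a = b) (u : TF n a) : TF n b :=
  fun x idx => u x (fun j => idx (Fin.cast h j))

lemma recast_rfl {n a : ℕ} (u : TF n a) : recast rfl u = u := rfl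

lemma recast_recast {n a b c : ℕ} (h : a = b) (h' : b = c) (u : TF n a) :
    recast h' (recast h u) = recast (h.trans h') u := by subst h h'; rfl

/-! ### permutation helpers -/

lemma comp_perm_of_range_eq {α : Type*} {M : ℕ} {f g : Fin M → α} (hf : Function.Injective f)
    (hg : Function.Injective g) (h : Set.range f = Set.range g) :
    ∃ τ : Equiv.Perm (Fin M), f = g ∘ τ := by
  refine ⟨(Equiv.ofInjective f hf).trans ((Equiv.setCongr h).trans (Equiv.ofInjective g hg).symm),
    ?_⟩
  funext i
  have := Equiv.apply_ofInjective_symm hg ((Equiv.setCongr h) (Equiv.ofInjective f hf i))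
  simpa using this.symm

lemma perm_factor {M : ℕ} (σ : Equiv.Perm (Fin (M + 1))) :
    ∃ τ : Equiv.Perm (Fin M), ⇑σ ∘ Fin.castSucc = (σ (Fin.last M)).succAbove ∘ τ := by
  apply comp_perm_of_range_eq (σ.injective.comp (Fin.castSucc_injective M))
    (Fin.succAbove_right_injective)
  rw [Fin.range_succAbove, Set.range_comp]
  have h1 : Set.range (Fin.castSucc : Fin M → Fin (M + 1)) = {Fin.last M}ᶜ := by
    rw [← Fin.succAbove_last, Fin.range_succAbove]
  rw [h1, Set.image_compl_eq σ.bijective, Set.image_singleton]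

def permExt {r : ℕ} (σ : Equiv.Perm (Fin r)) : Equiv.Perm (Fin (r + 1)) where
  toFun := Fin.snoc (fun j => Fin.castSucc (σ j)) (Fin.last r)
  invFun := Fin.snoc (fun j => Fin.castSucc (σ.symm j)) (Fin.last r)
  left_inv := by
    intro x
    induction x using Fin.lastCases with
    | last => simp
    | cast j => simp
  right_inv := by
    intro x
    induction x using Fin.lastCases with
    | last => simp
    | cast j => simp

lemma snoc_comp_permExt {n r : ℕ} (idx : Fin r → Fin n) (i : Fin n) (σ : Equiv.Perm (Fin r)) :
    (Fin.snoc idx i : Fin (r+1) → Fin n) ∘ (permExt σ) = Fin.snoc (idx ∘ σ) i := by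
  funext j
  induction j using Fin.lastCases with
  | last => simp [permExt]
  | cast j => simp [permExt, Function.comp]

lemma sum_perm_last {M : ℕ} (G : Fin (M + 1) → ℝ) :
    ∑ σ : Equiv.Perm (Fin (M + 1)), G (σ (Fin.last M)) = (M.factorial : ℝ) * ∑ j, G j := by
  have h1 : ∑ σ : Equiv.Perm (Fin (M + 1)), G (σ (Fin.last M))
      = ∑ σ : Equiv.Perm (Fin (M + 1)), G (σ 0) := by
    rw [← Equiv.sum_comp (Equiv.mulRight (Equiv.swap (0 : Fin (M + 1)) (Fin.last M)))
      (fun σ => G (σ 0))]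
    simp [Equiv.Perm.mul_apply]
  rw [h1, ← Equiv.sum_comp (Equiv.Perm.decomposeFin.symm) (fun σ => G (σ 0)),
    Fintype.sum_prod_type]
  simp only [Equiv.Perm.decomposeFin_symm_apply_zero, Finset.sum_const, Finset.card_univ,
    Fintype.card_perm, Fintype.card_fin, nsmul_eq_mul]
  rw [Finset.mul_sum]

/-! ### components and preservation -/

lemma IsSchwartzTF.comp_sc {n M : ℕ} {v : TF n M} (h : IsSchwartzTF v)
    (idx : Fin M → Fin n) : SC (fun x => v x idx) := h idx

lemma dsym_eq_sum {n M : ℕ} (v : TF n M) (x : E n) (idx : Fin (M + 1) → Fin n) :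
    dsym v x idx = ((M + 1).factorial : ℝ)⁻¹ *
      ∑ σ : Equiv.Perm (Fin (M + 1)),
        pd (idx (σ (Fin.last M))) (fun y => v y ((idx ∘ ⇑σ) ∘ Fin.castSucc)) x := rfl

lemma IsSchwartzTF.dsymTF {n M : ℕ} {v : TF n M} (h : IsSchwartzTF v) :
    IsSchwartzTF (dsym v) := by
  intro idx
  have : (fun x => dsym v x idx) = fun x => ((M + 1).factorial : ℝ)⁻¹ *
      ∑ σ : Equiv.Perm (Fin (M + 1)),
        pd (idx (σ (Fin.last M))) (fun y => v y ((idx ∘ ⇑σ) ∘ Fin.castSucc)) x := rfl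
  rw [this]
  exact SC.const_mul (SC.sum _ (fun σ _ => SC.pd (h _) _)) _

lemma IsSymTF.dsymTF {n M : ℕ} {v : TF n M} : IsSymTF (dsym v) := by
  intro x π idx
  rw [dsym_eq_sum, dsym_eq_sum]
  congr 1
  rw [← Equiv.sum_comp (Equiv.mulLeft π)
    (fun σ => pd (idx (σ (Fin.last M))) (fun y => v y ((idx ∘ ⇑σ) ∘ Fin.castSucc)) x)]
  apply Finset.sum_congr rfl
  intro σ _
  have h1 : ((idx ∘ ⇑π) ∘ ⇑σ) = (idx ∘ ⇑(π * σ)) := by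
    funext j; simp [Equiv.Perm.mul_apply, Function.comp]
  simp only [Equiv.coe_mulLeft]
  rw [h1]
  simp [Equiv.Perm.mul_apply, Function.comp]

lemma IsSchwartzTF.lapTF {n M : ℕ} {u : TF n M} (h : IsSchwartzTF u) :
    IsSchwartzTF (lap u) := by
  intro idx
  exact SC.sum _ (fun i _ => SC.pd (SC.pd (h idx) i) i)

lemma IsSymTF.lapTF {n M : ℕ} {u : TF n M} (h : IsSymTF u) : IsSymTF (lap u) := by
  intro x π idx
  unfold lap
  apply Finset.sum_congr rfl
  intro i _
  apply congrFun
  apply pd_congr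
  apply pd_congr
  funext z
  exact h z π idx

lemma IsSchwartzTF.div'TF {n M : ℕ} {u : TF n M} (h : IsSchwartzTF u) :
    IsSchwartzTF (div' u) := by
  cases M with
  | zero => intro idx; exact ⟨0, by funext x; simp [div']⟩
  | succ M =>
      intro idx
      exact SC.sum _ (fun i _ => SC.pd (h _) i)

lemma IsSymTF.div'TF {n M : ℕ} {u : TF n M} (h : IsSymTF u) : IsSymTF (div' u) := by
  cases M with
  | zero => intro x π idx; rfl
  | succ M =>
      intro x π idx
      show (∑ i : Fin n, pd i (fun y => u y (Fin.snoc (idx ∘ ⇑π) i)) x)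
        = ∑ i : Fin n, pd i (fun y => u y (Fin.snoc idx i)) x
      apply Finset.sum_congr rfl
      intro i _
      apply congrFun
      apply pd_congr
      funext y
      rw [← snoc_comp_permExt idx i π]
      exact h y (permExt π) (Fin.snoc idx i)

/-! ### Lemma A : dsym on symmetric fields -/

lemma dsym_apply {n M : ℕ} {w : TF n M} (hw : IsSymTF w) (x : E n)
    (idx : Fin (M + 1) → Fin n) :
    dsym w x idx = ((M + 1 : ℕ) : ℝ)⁻¹ *
      ∑ j : Fin (M + 1), pd (idx j) (fun y => w y (idx ∘ (Fin.succAbove j))) x := by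
  rw [dsym_eq_sum]
  have hterm : ∀ σ : Equiv.Perm (Fin (M + 1)),
      pd (idx (σ (Fin.last M))) (fun y => w y ((idx ∘ ⇑σ) ∘ Fin.castSucc)) x
        = pd (idx (σ (Fin.last M)))
            (fun y => w y (idx ∘ (Fin.succAbove (σ (Fin.last M))))) x := by
    intro σ
    apply congrFun
    apply pd_congr
    funext y
    obtain ⟨τ, hτ⟩ := perm_factor σ
    have h2 : ((idx ∘ ⇑σ) ∘ Fin.castSucc)
        = (idx ∘ Fin.succAbove (σ (Fin.last M))) ∘ ⇑τ := by
      funext j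
      have := congrFun hτ j
      simp only [Function.comp] at this ⊢
      rw [this]
    rw [h2]
    exact hw y τ (idx ∘ Fin.succAbove (σ (Fin.last M)))
  rw [Finset.sum_congr rfl (fun σ _ => hterm σ)]
  rw [sum_perm_last (fun j => pd (idx j) (fun y => w y (idx ∘ (Fin.succAbove j))) x)]
  rw [← mul_assoc, Nat.factorial_succ]
  congr 1
  have h3 : (M.factorial : ℝ) ≠ 0 := Nat.cast_ne_zero.mpr (Nat.factorial_ne_zero M)
  have h4 : ((M + 1 : ℕ) : ℝ) ≠ 0 := Nat.cast_ne_zero.mpr (Nat.succ_ne_zero M)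
  push_cast
  rw [mul_inv]
  field_simp

lemma snoc_comp_succAbove_castSucc {n M : ℕ} (idx : Fin (M + 1) → Fin n) (k : Fin n)
    (j' : Fin (M + 1)) :
    (Fin.snoc idx k : Fin (M + 2) → Fin n) ∘ (Fin.castSucc j').succAbove
      = Fin.snoc (idx ∘ j'.succAbove) k := by
  funext i
  induction i using Fin.lastCases with
  | last =>
      have h1 : (Fin.castSucc j').succAbove (Fin.last M) = Fin.last (M + 1) := by
        rw [Fin.succAbove_castSucc_of_le j' (Fin.last M) (Fin.le_last j'), Fin.succ_last]
      simp [h1]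
  | cast i' =>
      have h1 : (Fin.castSucc j').succAbove (Fin.castSucc i') = Fin.castSucc (j'.succAbove i') :=
        Fin.castSucc_succAbove_castSucc
      simp [h1, Function.comp]

/-- Lemma B : the basic commutation relation δ d = (M+2)⁻¹ Δ + (M+1)/(M+2) d δ. -/
lemma div'_dsym {n M : ℕ} {v : TF n (M + 1)} (hS : IsSchwartzTF v) (hsym : IsSymTF v) :
    div' (dsym v) = fun x idx => ((M + 2 : ℕ) : ℝ)⁻¹ * lap v x idx
      + ((M + 1 : ℕ) : ℝ) * ((M + 2 : ℕ) : ℝ)⁻¹ * dsym (div' v) x idx := by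
  funext x idx
  show (∑ k : Fin n, pd k (fun y => dsym v y (Fin.snoc idx k)) x) = _
  have hcomp : ∀ (J : Fin (M + 2) → Fin n) (j : Fin (M + 2)),
      SC (fun z => v z (J ∘ Fin.succAbove j)) := fun J j => hS _
  have step1 : ∀ k : Fin n, pd k (fun y => dsym v y (Fin.snoc idx k)) x
      = ((M + 2 : ℕ) : ℝ)⁻¹ * ∑ j : Fin (M + 2),
          pd k (pd ((Fin.snoc idx k : Fin (M+2) → Fin n) j)
            (fun z => v z ((Fin.snoc idx k : Fin (M+2) → Fin n) ∘ Fin.succAbove j))) x := by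
    intro k
    have h1 : (fun y => dsym v y (Fin.snoc idx k)) = fun y => ((M + 2 : ℕ) : ℝ)⁻¹ *
        ∑ j : Fin (M + 2), pd ((Fin.snoc idx k : Fin (M+2) → Fin n) j)
          (fun z => v z ((Fin.snoc idx k : Fin (M+2) → Fin n) ∘ Fin.succAbove j)) y := by
      funext y; exact dsym_apply hsym y (Fin.snoc idx k)
    rw [h1, pd_const_mul (Differentiable.fun_sum
        (fun j _ => (SC.pd (hcomp _ j) _).differentiable)) _ k]
    rw [pd_sum Finset.univ _ (fun j _ => (SC.pd (hcomp _ j) _).differentiable) k]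
  rw [Finset.sum_congr rfl (fun k _ => step1 k), ← Finset.mul_sum]
  have step2 : ∀ k : Fin n, ∑ j : Fin (M + 2),
      pd k (pd ((Fin.snoc idx k : Fin (M+2) → Fin n) j)
        (fun z => v z ((Fin.snoc idx k : Fin (M+2) → Fin n) ∘ Fin.succAbove j))) x
      = (∑ j' : Fin (M + 1),
          pd k (pd (idx j') (fun z => v z (Fin.snoc (idx ∘ j'.succAbove) k))) x)
        + pd k (pd k (fun z => v z idx)) x := by
    intro k
    rw [Fin.sum_univ_castSucc]
    congr 1
    · apply Finset.sum_congr rfl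
      intro j' _
      have h2 : (Fin.snoc idx k : Fin (M+2) → Fin n) (Fin.castSucc j') = idx j' := by
        simp
      rw [h2, snoc_comp_succAbove_castSucc]
    · have h3 : (Fin.snoc idx k : Fin (M+2) → Fin n) (Fin.last (M + 1)) = k := by
        simp
      have h4 : (Fin.snoc idx k : Fin (M+2) → Fin n) ∘ Fin.succAbove (Fin.last (M + 1))
          = idx := by
        rw [Fin.succAbove_last]; exact Fin.snoc_comp_castSucc
      rw [h3, h4]
  rw [Finset.sum_congr rfl (fun k _ => step2 k), Finset.sum_add_distrib]
  have hlap : (∑ k : Fin n, pd k (pd k (fun z => v z idx)) x) = lap v x idx := rfl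
  have step3 : (∑ k : Fin n, ∑ j' : Fin (M + 1),
      pd k (pd (idx j') (fun z => v z (Fin.snoc (idx ∘ j'.succAbove) k))) x)
      = ((M + 1 : ℕ) : ℝ) * dsym (div' v) x idx := by
    rw [Finset.sum_comm]
    have h5 : ∀ j' : Fin (M + 1), ∑ k : Fin n,
        pd k (pd (idx j') (fun z => v z (Fin.snoc (idx ∘ j'.succAbove) k))) x
        = pd (idx j') (fun y => div' v y (idx ∘ j'.succAbove)) x := by
      intro j'
      have h6 : ∀ k : Fin n,
          pd k (pd (idx j') (fun z => v z (Fin.snoc (idx ∘ j'.succAbove) k))) x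
          = pd (idx j') (pd k (fun z => v z (Fin.snoc (idx ∘ j'.succAbove) k))) x := by
        intro k
        rw [pd_comm (SC.contDiff (hS _))]
      rw [Finset.sum_congr rfl (fun k _ => h6 k)]
      have h7 : (fun y => div' v y (idx ∘ j'.succAbove))
          = fun y => ∑ k : Fin n, pd k (fun z => v z (Fin.snoc (idx ∘ j'.succAbove) k)) y :=
        rfl
      rw [h7, pd_sum Finset.univ _ (fun k _ => (SC.pd (hS _) _).differentiable) (idx j')]
    rw [Finset.sum_congr rfl (fun j' _ => h5 j')]
    rw [dsym_apply (IsSymTF.div'TF hsym) x idx]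
    simp only [Nat.add_sub_cancel]
    rw [← mul_assoc, mul_inv_cancel₀ (by positivity : ((M + 1 : ℕ) : ℝ) ≠ 0), one_mul]
    rfl
  rw [hlap, step3]
  ring

lemma pd_sum_sc {n : ℕ} {ι : Type*} (s : Finset ι) (g : ι → E n → ℝ)
    (hg : ∀ k ∈ s, SC (g k)) (i : Fin n) :
    pd i (fun y => ∑ k ∈ s, g k y) = fun x => ∑ k ∈ s, pd i (g k) x :=
  pd_sum s g (fun k hk => (hg k hk).differentiable) i

lemma pd_comm3 {n : ℕ} {h : E n → ℝ} (hs : SC h) (a i : Fin n) :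
    pd a (pd i (pd i h)) = pd i (pd i (pd a h)) := by
  rw [pd_comm (SC.contDiff (hs.pd i)) a i]
  exact pd_congr i (pd_comm hs.contDiff a i)

/-- Δ commutes with δ. -/
lemma lap_div' {n M : ℕ} {u : TF n M} (hS : IsSchwartzTF u) :
    div' (lap u) = lap (div' u) := by
  cases M with
  | zero =>
      funext x idx
      show (0 : ℝ) = ∑ i : Fin n, pd i (pd i (fun _ => (0:ℝ))) x
      have h0 : ∀ i : Fin n, pd i (fun _ : E n => (0:ℝ)) = fun _ => (0:ℝ) := by
        intro i; funext y; simp [pd]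
      have h1 : ∀ i : Fin n, pd i (pd i (fun _ : E n => (0:ℝ))) x = 0 := by
        intro i
        rw [pd_congr i (h0 i)]
        exact congrFun (h0 i) x
      rw [Finset.sum_congr rfl (fun i _ => h1 i)]
      simp
  | succ M =>
      funext x idx
      show (∑ k : Fin n, pd k (fun y => lap u y (Fin.snoc idx k)) x)
        = ∑ i : Fin n, pd i (pd i (fun z => div' u z idx)) x
      have hL : ∀ k : Fin n, pd k (fun y => lap u y (Fin.snoc idx k)) x
          = ∑ i : Fin n, pd k (pd i (pd i (fun z => u z (Fin.snoc idx k)))) x := by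
        intro k
        have h1 : (fun y => lap u y (Fin.snoc idx k))
            = fun y => ∑ i : Fin n, pd i (pd i (fun z => u z (Fin.snoc idx k))) y := rfl
        rw [h1, pd_sum_sc Finset.univ _ (fun i _ => SC.pd (SC.pd (hS _) i) i) k]
      have hR : ∀ i : Fin n, pd i (pd i (fun z => div' u z idx)) x
          = ∑ k : Fin n, pd i (pd i (pd k (fun z => u z (Fin.snoc idx k)))) x := by
        intro i
        have h2 : (fun z => div' u z idx)
            = fun z => ∑ k : Fin n, pd k (fun y => u y (Fin.snoc idx k)) z := rfl
        rw [h2, pd_congr i (pd_sum_sc Finset.univ _ (fun k _ => SC.pd (hS _) k) i),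
          pd_sum_sc Finset.univ _ (fun k _ => SC.pd (SC.pd (hS _) k) i) i]
      rw [Finset.sum_congr rfl (fun k _ => hL k), Finset.sum_congr rfl (fun i _ => hR i),
        Finset.sum_comm]
      apply Finset.sum_congr rfl; intro k _
      apply Finset.sum_congr rfl; intro i _
      rw [pd_comm3 (hS _) i k]

/-- Δ commutes with d. -/
lemma lap_dsym {n M : ℕ} {v : TF n M} (hS : IsSchwartzTF v) :
    lap (dsym v) = dsym (lap v) := by
  funext x idx
  have hR : dsym (lap v) x idx = ((M+1).factorial : ℝ)⁻¹ *
      ∑ σ : Equiv.Perm (Fin (M+1)), ∑ i : Fin n,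
        pd (idx (σ (Fin.last M)))
          (pd i (pd i (fun z => v z ((idx ∘ ⇑σ) ∘ Fin.castSucc)))) x := by
    rw [dsym_eq_sum]
    congr 1
    apply Finset.sum_congr rfl; intro σ _
    have h1 : (fun y => lap v y ((idx ∘ ⇑σ) ∘ Fin.castSucc))
        = fun y => ∑ i : Fin n, pd i (pd i (fun z => v z ((idx ∘ ⇑σ) ∘ Fin.castSucc))) y := rfl
    rw [h1, pd_sum_sc Finset.univ _ (fun i _ => SC.pd (SC.pd (hS _) i) i) _]
  have hL : lap (dsym v) x idx = ((M+1).factorial : ℝ)⁻¹ *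
      ∑ σ : Equiv.Perm (Fin (M+1)), ∑ i : Fin n,
        pd i (pd i (pd (idx (σ (Fin.last M)))
          (fun z => v z ((idx ∘ ⇑σ) ∘ Fin.castSucc)))) x := by
    show (∑ i : Fin n, pd i (pd i (fun z => dsym v z idx)) x) = _
    have h2 : (fun z => dsym v z idx) = fun z => ((M+1).factorial : ℝ)⁻¹ *
        ∑ σ : Equiv.Perm (Fin (M+1)),
          pd (idx (σ (Fin.last M))) (fun y => v y ((idx ∘ ⇑σ) ∘ Fin.castSucc)) z := by
      funext z; exact dsym_eq_sum v z idx
    have hdiff : ∀ σ : Equiv.Perm (Fin (M+1)), SC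
        (pd (idx (σ (Fin.last M))) (fun y => v y ((idx ∘ ⇑σ) ∘ Fin.castSucc))) :=
      fun σ => SC.pd (hS _) _
    have h3 : ∀ i : Fin n, pd i (pd i (fun z => dsym v z idx))
        = fun y => ((M+1).factorial : ℝ)⁻¹ * ∑ σ : Equiv.Perm (Fin (M+1)),
            pd i (pd i (pd (idx (σ (Fin.last M)))
              (fun z => v z ((idx ∘ ⇑σ) ∘ Fin.castSucc)))) y := by
      intro i
      have e1 : pd i (fun z => dsym v z idx) = fun y => ((M+1).factorial : ℝ)⁻¹ *
          ∑ σ : Equiv.Perm (Fin (M+1)),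
            pd i (pd (idx (σ (Fin.last M)))
              (fun z => v z ((idx ∘ ⇑σ) ∘ Fin.castSucc))) y := by
        rw [pd_congr i h2, pd_const_mul (Differentiable.fun_sum
          (fun σ _ => (hdiff σ).differentiable)) _ i]
        funext y
        rw [pd_sum_sc Finset.univ _ (fun σ _ => hdiff σ) i]
      rw [pd_congr i e1, pd_const_mul (Differentiable.fun_sum
          (fun σ _ => (SC.pd (hdiff σ) i).differentiable)) _ i]
      funext y
      rw [pd_sum_sc Finset.univ _ (fun σ _ => SC.pd (hdiff σ) i) i]
    rw [Finset.sum_congr rfl (fun i _ => congrFun (h3 i) x), ← Finset.sum_comm,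
      ← Finset.mul_sum]
  rw [hL, hR]
  congr 1
  apply Finset.sum_congr rfl; intro σ _
  apply Finset.sum_congr rfl; intro i _
  rw [pd_comm3 (hS _) _ i]

/-! ### linear combinations -/

lemma pd_comb2 {n : ℕ} {h₁ h₂ : E n → ℝ} (hd₁ : Differentiable ℝ h₁)
    (hd₂ : Differentiable ℝ h₂) (a b : ℝ) (i : Fin n) :
    pd i (fun y => a * h₁ y + b * h₂ y) = fun x => a * pd i h₁ x + b * pd i h₂ x := by
  funext x
  rw [congrFun (pd_add (hd₁.const_mul a) (hd₂.const_mul b) i) x,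
    congrFun (pd_const_mul hd₁ a i) x, congrFun (pd_const_mul hd₂ b i) x]

lemma isSchwartzTF_comb2 {n M : ℕ} {u w : TF n M} (hu : IsSchwartzTF u)
    (hw : IsSchwartzTF w) (a b : ℝ) :
    IsSchwartzTF (fun x idx => a * u x idx + b * w x idx) := fun idx =>
  SC.add (SC.const_mul (hu idx) a) (SC.const_mul (hw idx) b)

lemma dsym_comb2 {n M : ℕ} {u w : TF n M} (hu : IsSchwartzTF u) (hw : IsSchwartzTF w)
    (a b : ℝ) :
    dsym (fun x idx => a * u x idx + b * w x idx)
      = fun x idx => a * dsym u x idx + b * dsym w x idx := by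
  funext x idx
  rw [dsym_eq_sum, dsym_eq_sum u x idx, dsym_eq_sum w x idx]
  have h1 : ∀ σ ∈ (Finset.univ : Finset (Equiv.Perm (Fin (M+1)))),
      pd (idx (σ (Fin.last M)))
        (fun y => (fun x idx => a * u x idx + b * w x idx) y ((idx ∘ ⇑σ) ∘ Fin.castSucc)) x
      = a * pd (idx (σ (Fin.last M))) (fun y => u y ((idx ∘ ⇑σ) ∘ Fin.castSucc)) x
        + b * pd (idx (σ (Fin.last M))) (fun y => w y ((idx ∘ ⇑σ) ∘ Fin.castSucc)) x :=
    fun σ _ => congrFun (pd_comb2 (SC.differentiable (hu _)) (SC.differentiable (hw _)) a b _) x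
  rw [Finset.sum_congr rfl h1, Finset.sum_add_distrib, ← Finset.mul_sum, ← Finset.mul_sum]
  ring

lemma div'_comb2 {n M : ℕ} {u w : TF n M} (hu : IsSchwartzTF u) (hw : IsSchwartzTF w)
    (a b : ℝ) :
    div' (fun x idx => a * u x idx + b * w x idx)
      = fun x idx => a * div' u x idx + b * div' w x idx := by
  cases M with
  | zero => funext x idx; show (0:ℝ) = a * 0 + b * 0; ring
  | succ M =>
      funext x idx
      show (∑ k : Fin n, pd k
          (fun y => a * u y (Fin.snoc idx k) + b * w y (Fin.snoc idx k)) x) = _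
      have h1 : ∀ k ∈ (Finset.univ : Finset (Fin n)),
          pd k (fun y => a * u y (Fin.snoc idx k) + b * w y (Fin.snoc idx k)) x
          = a * pd k (fun y => u y (Fin.snoc idx k)) x
            + b * pd k (fun y => w y (Fin.snoc idx k)) x :=
        fun k _ => congrFun (pd_comb2 (SC.differentiable (hu _)) (SC.differentiable (hw _)) a b k) x
      rw [Finset.sum_congr rfl h1, Finset.sum_add_distrib, ← Finset.mul_sum, ← Finset.mul_sum]
      rfl

lemma lap_comb2 {n M : ℕ} {u w : TF n M} (hu : IsSchwartzTF u) (hw : IsSchwartzTF w)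
    (a b : ℝ) :
    lap (fun x idx => a * u x idx + b * w x idx)
      = fun x idx => a * lap u x idx + b * lap w x idx := by
  funext x idx
  show (∑ i : Fin n, pd i (pd i (fun z => a * u z idx + b * w z idx)) x) = _
  have h1 : ∀ i ∈ (Finset.univ : Finset (Fin n)),
      pd i (pd i (fun z => a * u z idx + b * w z idx)) x
      = a * pd i (pd i (fun z => u z idx)) x + b * pd i (pd i (fun z => w z idx)) x := by
    intro i _
    rw [pd_congr i (pd_comb2 (SC.differentiable (hu _)) (SC.differentiable (hw _)) a b i)]
    exact congrFun (pd_comb2 (SC.differentiable (SC.pd (hu idx) i))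
      (SC.differentiable (SC.pd (hw idx) i)) a b i) x
  rw [Finset.sum_congr rfl h1, Finset.sum_add_distrib, ← Finset.mul_sum, ← Finset.mul_sum]
  rfl

/-- lap of a finite linear combination. -/
lemma lap_comb {n M : ℕ} {ι : Type*} (s : Finset ι) (c : ι → ℝ) (u : ι → TF n M)
    (hu : ∀ k ∈ s, IsSchwartzTF (u k)) :
    lap (fun x idx => ∑ k ∈ s, c k * u k x idx)
      = fun x idx => ∑ k ∈ s, c k * lap (u k) x idx := by
  classical
  induction s using Finset.induction with
  | empty =>
      funext x idx
      show (∑ i : Fin n, pd i (pd i (fun _ => (0:ℝ))) x) = 0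
      have h0 : ∀ i : Fin n, pd i (fun _ : E n => (0:ℝ)) = fun _ => (0:ℝ) := by
        intro i; funext y; simp [pd]
      have h1 : ∀ i ∈ (Finset.univ : Finset (Fin n)),
          pd i (pd i (fun _ : E n => (0:ℝ))) x = 0 := by
        intro i _
        rw [pd_congr i (h0 i)]
        exact congrFun (h0 i) x
      rw [Finset.sum_congr rfl h1]
      simp
  | @insert a s ha ih =>
      have hu' : ∀ k ∈ s, IsSchwartzTF (u k) :=
        fun k hk => hu k (Finset.mem_insert_of_mem hk)
      have hS : IsSchwartzTF (fun x idx => ∑ k ∈ s, c k * u k x idx) := by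
        intro idx
        exact SC.sum s (fun k hk => SC.const_mul (hu' k hk idx) (c k))
      have e1 : (fun x idx => ∑ k ∈ Insert.insert a s, c k * u k x idx)
          = fun x idx => c a * u a x idx + 1 * (∑ k ∈ s, c k * u k x idx) := by
        funext x idx; rw [Finset.sum_insert ha]; ring
      rw [e1, lap_comb2 (hu a (Finset.mem_insert_self a s)) hS (c a) 1, ih hu']
      funext x idx
      rw [Finset.sum_insert ha]
      simp

/-! ### recast commutations -/

lemma dsym_recast {n a b : ℕ} (h : a = b) (h2 : a + 1 = b + 1) (u : TF n a) :
    dsym (recast h u) = recast h2 (dsym u) := by subst h; rfl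

lemma div'_recast {n a b : ℕ} (h : a = b) (h2 : a - 1 = b - 1) (u : TF n a) :
    div' (recast h u) = recast h2 (div' u) := by subst h; rfl

lemma lap_recast {n a b : ℕ} (h : a = b) (u : TF n a) :
    lap (recast h u) = recast h (lap u) := by subst h; rfl

lemma divIter_recast {n a b : ℕ} (k : ℕ) (h : a = b) (h2 : a - k = b - k) (u : TF n a) :
    divIter k (recast h u) = recast h2 (divIter k u) := by subst h; rfl

lemma recast_comb2 {n a b : ℕ} (h : a = b) (u w : TF n a) (c d : ℝ) :
    recast h (fun x idx => c * u x idx + d * w x idx)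
      = fun x idx => c * recast h u x idx + d * recast h w x idx := by subst h; rfl

lemma IsSchwartzTF.recastTF {n a b : ℕ} (h : a = b) {u : TF n a} (hu : IsSchwartzTF u) :
    IsSchwartzTF (recast h u) := by subst h; exact hu

lemma IsSymTF.recastTF {n a b : ℕ} (h : a = b) {u : TF n a} (hu : IsSymTF u) :
    IsSymTF (recast h u) := by subst h; exact hu

/-! ### iterates -/

lemma IsSchwartzTF.divIterTF {n r : ℕ} (k : ℕ) {u : TF n r} (hu : IsSchwartzTF u) :
    IsSchwartzTF (divIter k u) := by
  induction k with
  | zero => exact hu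
  | succ k ih => exact ih.div'TF

lemma IsSymTF.divIterTF {n r : ℕ} (k : ℕ) {u : TF n r} (hu : IsSymTF u) :
    IsSymTF (divIter k u) := by
  induction k with
  | zero => exact hu
  | succ k ih => exact ih.div'TF

lemma IsSchwartzTF.dIterTF {n r : ℕ} (k : ℕ) {u : TF n r} (hu : IsSchwartzTF u) :
    IsSchwartzTF (dIter k u) := by
  induction k with
  | zero => exact hu
  | succ k ih => exact ih.dsymTF

lemma IsSymTF.dIterTF {n r : ℕ} (k : ℕ) {u : TF n r} (hu : IsSymTF u) :
    IsSymTF (dIter k u) := by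
  induction k with
  | zero => exact hu
  | succ k ih => exact IsSymTF.dsymTF

lemma divIter_lap {n r : ℕ} (k : ℕ) {u : TF n r} (hu : IsSchwartzTF u) :
    divIter k (lap u) = lap (divIter k u) := by
  induction k with
  | zero => rfl
  | succ k ih =>
      show div' (divIter k (lap u)) = _
      rw [ih, lap_div' (hu.divIterTF k)]
      rfl

lemma divIter_comb2 {n r : ℕ} (k : ℕ) {u w : TF n r} (hu : IsSchwartzTF u)
    (hw : IsSchwartzTF w) (a b : ℝ) :
    divIter k (fun x idx => a * u x idx + b * w x idx)
      = fun x idx => a * divIter k u x idx + b * divIter k w x idx := by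
  induction k with
  | zero => rfl
  | succ k ih =>
      show div' (divIter k _) = _
      rw [ih, div'_comb2 (hu.divIterTF k) (hw.divIterTF k) a b]
      rfl

lemma divIter_succ' {n r : ℕ} (k : ℕ) (u : TF n r) (h : r - 1 - k = r - (k + 1)) :
    divIter (k + 1) u = recast h (divIter k (div' u)) := by
  induction k with
  | zero => rfl
  | succ k ih =>
      show div' (divIter (k + 1) u) = _
      rw [ih (by omega), div'_recast (by omega) (by omega) (divIter k (div' u))]
      rfl

lemma dIter_succ' {n r : ℕ} (k : ℕ) (v : TF n r) (h : r + 1 + k = r + (k + 1)) :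
    dIter (k + 1) v = recast h (dIter k (dsym v)) := by
  induction k with
  | zero => rfl
  | succ k ih =>
      show dsym (dIter (k + 1) v) = _
      rw [ih (by omega), dsym_recast (by omega) (by omega) (dIter k (dsym v))]
      rfl

/-- Lemma F : δ d^(k+1) = A Δ d^k + B d^(k+1) δ on Schwartz symmetric fields. -/
lemma lemmaF {n m : ℕ} (k : ℕ) : ∃ A B : ℝ, ∀ w : TF n (m + 1),
    IsSchwartzTF w → IsSymTF w →
    div' (dIter (k + 1) w) = fun x idx => A * lap (dIter k w) x idx
      + B * recast (show m + 1 - 1 + (k + 1) = m + 1 + k by omega)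
          (dIter (k + 1) (div' w)) x idx := by
  induction k with
  | zero =>
      refine ⟨((m + 2 : ℕ) : ℝ)⁻¹, ((m + 1 : ℕ) : ℝ) * ((m + 2 : ℕ) : ℝ)⁻¹, ?_⟩
      intro w hS hsym
      exact div'_dsym hS hsym
  | succ k ih =>
      obtain ⟨A, B, hAB⟩ := ih
      refine ⟨((m + 1 + k + 2 : ℕ) : ℝ)⁻¹ + ((m + 1 + k + 1 : ℕ) : ℝ)
          * ((m + 1 + k + 2 : ℕ) : ℝ)⁻¹ * A,
        ((m + 1 + k + 1 : ℕ) : ℝ) * ((m + 1 + k + 2 : ℕ) : ℝ)⁻¹ * B, ?_⟩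
      intro w hS hsym
      have hDS : IsSchwartzTF (dIter (k + 1) w) := hS.dIterTF (k + 1)
      have hDsym : IsSymTF (dIter (k + 1) w) := hsym.dIterTF (k + 1)
      have e0 : div' (dIter (k + 1 + 1) w) = div' (dsym (dIter (k + 1) w)) := rfl
      rw [e0, div'_dsym (M := m + 1 + k) hDS hDsym]
      have hLapS : IsSchwartzTF (lap (dIter k w)) := (hS.dIterTF k).lapTF
      have hRecS : IsSchwartzTF (recast (show m + 1 - 1 + (k + 1) = m + 1 + k by omega)
          (dIter (k + 1) (div' w))) :=
        IsSchwartzTF.recastTF _ ((hS.div'TF).dIterTF (k + 1))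
      rw [hAB w hS hsym, dsym_comb2 hLapS hRecS A B, ← lap_dsym (hS.dIterTF k),
        dsym_recast (show m + 1 - 1 + (k + 1) = m + 1 + k by omega)
          (show m + 1 - 1 + (k + 1) + 1 = m + 1 + k + 1 by omega)]
      funext x idx
      show ((m + 1 + k + 2 : ℕ) : ℝ)⁻¹ * lap (dIter (k+1) w) x idx
          + ((m + 1 + k + 1 : ℕ) : ℝ) * ((m + 1 + k + 2 : ℕ) : ℝ)⁻¹
            * (A * lap (dIter (k+1) w) x idx
              + B * recast (show m + 1 - 1 + (k + 1 + 1) = m + 1 + (k + 1) by omega)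
                  (dIter (k + 1 + 1) (div' w)) x idx) = _
      ring

lemma divIter_recast' {n a b : ℕ} (k : ℕ) (h : a = b) (u : TF n a) :
    divIter k (recast h u)
      = recast (congrArg (fun t => t - k) h) (divIter k u) := by subst h; rfl

lemma IsSchwartzTF.lapIterTF {n M : ℕ} (j : ℕ) {u : TF n M} (hu : IsSchwartzTF u) :
    IsSchwartzTF (lap^[j] u) := by
  induction j with
  | zero => exact hu
  | succ j ih => rw [Function.iterate_succ_apply']; exact ih.lapTF

lemma IsSchwartzTF.ddIterTF {n M : ℕ} (i : ℕ) {v : TF n (M + 1)}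
    (hv : IsSchwartzTF v) :
    IsSchwartzTF ((fun u : TF n (M + 1) => (dsym (div' u) : TF n (M + 1)))^[i] v) := by
  induction i with
  | zero => exact hv
  | succ i ih =>
      rw [Function.iterate_succ_apply']
      exact (ih.div'TF).dsymTF

lemma IsSymTF.ddIterTF {n M : ℕ} (i : ℕ) {v : TF n (M + 1)} (hv : IsSymTF v) :
    IsSymTF ((fun u : TF n (M + 1) => (dsym (div' u) : TF n (M + 1)))^[i] v) := by
  induction i with
  | zero => exact hv
  | succ i ih =>
      rw [Function.iterate_succ_apply']
      exact IsSymTF.dsymTF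

lemma main_aux {n m : ℕ} : ∀ ℓ : ℕ, 1 ≤ ℓ → ∃ c : ℕ → ℝ,
    ∀ v : TF n (m + 1), IsSchwartzTF v → IsSymTF v →
    recast (show m + 1 + ℓ - ℓ = m + 1 from Nat.add_sub_cancel (m + 1) ℓ) (divIter ℓ (dIter ℓ v))
      = fun x idx => ∑ i ∈ Finset.range (ℓ + 1),
          c i * ((lap (n := n) (m := m + 1))^[ℓ - i]
            ((fun u : TF n (m + 1) => (dsym (div' u) : TF n (m + 1)))^[i] v)) x idx := by
  intro ℓ hℓ
  induction ℓ, hℓ using Nat.le_induction with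
  | base =>
      refine ⟨fun i => if i = 0 then ((m + 2 : ℕ) : ℝ)⁻¹
        else ((m + 1 : ℕ) : ℝ) * ((m + 2 : ℕ) : ℝ)⁻¹, ?_⟩
      intro v hS hsym
      have e : recast (show m + 1 + 1 - 1 = m + 1 by omega) (divIter 1 (dIter 1 v))
          = div' (dsym v) := rfl
      rw [e, div'_dsym hS hsym]
      funext x idx
      rw [Finset.sum_range_succ, Finset.sum_range_one]
      norm_num
  | succ ℓ hℓ ih =>
      obtain ⟨c, hc⟩ := ih
      obtain ⟨A, B, hF⟩ := lemmaF (n := n) (m := m) ℓ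
      refine ⟨fun i => (if i ≤ ℓ then A * c i else 0)
        + (if i = 0 then 0 else B * c (i - 1)), ?_⟩
      intro v hS hsym
      have hw'S : IsSchwartzTF (dsym (div' v)) := (hS.div'TF).dsymTF
      have hw'sym : IsSymTF (dsym (div' v)) := IsSymTF.dsymTF
      rw [divIter_succ' (n := n) ℓ (dIter (ℓ + 1) v) (by omega), recast_recast,
        hF v hS hsym, dIter_succ' (n := n) ℓ (div' v) (by omega), recast_recast,
        divIter_comb2 ℓ ((hS.dIterTF ℓ).lapTF)
          (IsSchwartzTF.recastTF _ ((hw'S).dIterTF ℓ)) A B,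
        divIter_lap ℓ (hS.dIterTF ℓ), divIter_recast']
      trans (fun x idx => A * lap (recast (show m + 1 + ℓ - ℓ = m + 1 from Nat.add_sub_cancel (m + 1) ℓ)
          (divIter ℓ (dIter ℓ v))) x idx
        + B * recast (show m + 1 + ℓ - ℓ = m + 1 from Nat.add_sub_cancel (m + 1) ℓ)
            (divIter ℓ (dIter ℓ ((dsym (div' v) : TF n (m + 1))))) x idx)
      · rfl
      · rw [hc v hS hsym, hc (dsym (div' v)) hw'S hw'sym,
          lap_comb (Finset.range (ℓ+1)) c _
            (fun i _ => IsSchwartzTF.lapIterTF (ℓ - i) (hS.ddIterTF i))]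
        funext x idx
        beta_reduce
        have key : ∀ P : ℕ → ℝ,
            A * (∑ i ∈ Finset.range (ℓ+1), c i * P i)
              + B * (∑ i ∈ Finset.range (ℓ+1), c i * P (i+1))
            = ∑ i ∈ Finset.range (ℓ+1+1),
                ((if i ≤ ℓ then A * c i else 0)
                  + (if i = 0 then 0 else B * c (i-1))) * P i := by
          intro P
          have e1 : ∀ i, ((if i+1 ≤ ℓ then A * c (i+1) else 0)
              + (if i+1 = 0 then 0 else B * c (i+1-1))) * P (i+1)
              = (if i+1 ≤ ℓ then A * c (i+1) else 0) * P (i+1)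
                + B * (c i * P (i+1)) := by
            intro i
            rw [if_neg (Nat.succ_ne_zero i), Nat.add_sub_cancel, add_mul]
            ring
          have step1 : ∑ i ∈ Finset.range (ℓ+1+1), ((if i ≤ ℓ then A * c i else 0)
                + (if i = 0 then 0 else B * c (i-1))) * P i
              = (∑ i ∈ Finset.range (ℓ+1), ((if i+1 ≤ ℓ then A * c (i+1) else 0)
                  + (if i+1 = 0 then 0 else B * c (i+1-1))) * P (i+1))
                + ((if (0:ℕ) ≤ ℓ then A * c 0 else 0)
                  + (if (0:ℕ) = 0 then 0 else B * c (0-1))) * P 0 :=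
            Finset.sum_range_succ' _ (ℓ+1)
          have step2 : ∑ i ∈ Finset.range (ℓ+1), ((if i+1 ≤ ℓ then A * c (i+1) else 0)
                + (if i+1 = 0 then 0 else B * c (i+1-1))) * P (i+1)
              = (∑ i ∈ Finset.range (ℓ+1),
                  (if i+1 ≤ ℓ then A * c (i+1) else 0) * P (i+1))
                + B * ∑ i ∈ Finset.range (ℓ+1), c i * P (i+1) := by
            rw [Finset.mul_sum, ← Finset.sum_add_distrib]
            exact Finset.sum_congr rfl (fun i _ => e1 i)
          have step3 : ∑ i ∈ Finset.range (ℓ+1),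
                (if i+1 ≤ ℓ then A * c (i+1) else 0) * P (i+1)
              = A * ∑ i ∈ Finset.range ℓ, c (i+1) * P (i+1) := by
            rw [Finset.sum_range_succ, if_neg (by omega : ¬ ℓ+1 ≤ ℓ), zero_mul, add_zero,
              Finset.mul_sum]
            exact Finset.sum_congr rfl (fun i hi => by
              rw [if_pos (by have := Finset.mem_range.mp hi; omega : i+1 ≤ ℓ), mul_assoc])
          have step4 : ∑ i ∈ Finset.range (ℓ+1), c i * P i
              = (∑ i ∈ Finset.range ℓ, c (i+1) * P (i+1)) + c 0 * P 0 :=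
            Finset.sum_range_succ' _ ℓ
          have e0 : ((if (0:ℕ) ≤ ℓ then A * c 0 else 0)
              + (if (0:ℕ) = 0 then 0 else B * c (0-1))) * P 0 = A * (c 0 * P 0) := by
            rw [if_pos (Nat.zero_le ℓ), if_pos rfl, add_zero]
            ring
          rw [step1, step2, step3, step4, e0]
          ring
        have hA : (∑ i ∈ Finset.range (ℓ+1), c i
              * lap ((lap (n := n) (m := m+1))^[ℓ-i]
                ((fun u : TF n (m+1) => (dsym (div' u) : TF n (m+1)))^[i] v)) x idx)
            = ∑ i ∈ Finset.range (ℓ+1), c i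
              * ((lap (n := n) (m := m+1))^[ℓ+1-i]
                ((fun u : TF n (m+1) => (dsym (div' u) : TF n (m+1)))^[i] v)) x idx := by
          apply Finset.sum_congr rfl
          intro i hi
          have hi' : i < ℓ + 1 := Finset.mem_range.mp hi
          rw [show ℓ+1-i = (ℓ-i)+1 from by omega, Function.iterate_succ_apply']
        have hB : (∑ i ∈ Finset.range (ℓ+1), c i
              * ((lap (n := n) (m := m+1))^[ℓ-i]
                ((fun u : TF n (m+1) => (dsym (div' u) : TF n (m+1)))^[i]
                  (dsym (div' v)))) x idx)
            = ∑ i ∈ Finset.range (ℓ+1), c i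
              * ((lap (n := n) (m := m+1))^[ℓ+1-(i+1)]
                ((fun u : TF n (m+1) => (dsym (div' u) : TF n (m+1)))^[i+1] v)) x idx := by
          apply Finset.sum_congr rfl
          intro i hi
          rw [Nat.succ_sub_succ]
          rw [show ((fun u : TF n (m+1) => (dsym (div' u) : TF n (m+1)))^[i+1] v)
            = (fun u : TF n (m+1) => (dsym (div' u) : TF n (m+1)))^[i]
                ((dsym (div' v) : TF n (m+1))) from Function.iterate_succ_apply _ i v]
        rw [hA, hB]
        exact key (fun i => ((lap (n := n) (m := m+1))^[ℓ+1-i]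
          ((fun u : TF n (m+1) => (dsym (div' u) : TF n (m+1)))^[i] v)) x idx)
/-- For every `ℓ ≥ 1` there are real constants `c₀, …, c_ℓ` (depending only on `ℓ, m, n`)
with `δ^ℓ d^ℓ v = ∑ᵢ cᵢ Δ̄^(ℓ-i) (dδ)^i v` for all Schwartz symmetric tensor fields `v`. -/
theorem stmt4 {n m ℓ : ℕ} (hℓ : 1 ≤ ℓ) :
    ∃ c : ℕ → ℝ, ∀ v : TF n (m + 1), IsSchwartzTF v → IsSymTF v →
      ∀ (x : E n) (idx : Fin (m + 1) → Fin n),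
        divIter ℓ (dIter ℓ v) x (fun j => idx (Fin.cast (show m + 1 + ℓ - ℓ = m + 1 by omega) j))
          = ∑ i ∈ Finset.range (ℓ + 1),
              c i * ((lap (n := n) (m := m + 1))^[ℓ - i]
                      ((fun u : TF n (m + 1) => (dsym (div' u) : TF n (m + 1)))^[i] v)) x idx := by
  obtain ⟨c, hc⟩ := main_aux (n := n) (m := m) ℓ hℓ
  refine ⟨c, fun v hS hsym x idx => ?_⟩
  exact congrFun (congrFun (hc v hS hsym) x) idx

end
end

section
/- Let v be a Schwartz symmetric (m−i)-tensor field on ℝⁿ and i ≥ 0. Then 𝒯ᵐ(dⁱ v)(ω, p) = ∂ⁱ/∂pⁱ [𝒯^{m−i} v(ω, p)]. -/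
open MeasureTheory
open Module
open scoped RealInnerProductSpace
noncomputable section

def rep {n m : ℕ} {u : TF n m} (hS : IsSchwartzTF u) (idx : Fin m → Fin n) :
    SchwartzMap (E n) ℝ := (hS idx).choose

lemma rep_spec {n m : ℕ} {u : TF n m} (hS : IsSchwartzTF u) (idx : Fin m → Fin n) :
    (fun x => u x idx) = ⇑(rep hS idx) := (hS idx).choose_spec

lemma schwartz_sum_apply {n : ℕ} {ι : Type*} (s : Finset ι) (g : ι → SchwartzMap (E n) ℝ)
    (x : E n) : (∑ i ∈ s, g i) x = ∑ i ∈ s, g i x := by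
  classical
  induction s using Finset.induction_on with
  | empty => simp
  | insert a s ha ih => rw [Finset.sum_insert ha, Finset.sum_insert ha, SchwartzMap.add_apply, ih]

lemma pderivCLM_apply' {n : ℕ} (m : E n) (f : SchwartzMap (E n) ℝ) (x : E n) :
    LineDeriv.lineDerivOpCLM ℝ (SchwartzMap (E n) ℝ) m f x = fderiv ℝ f x m := rfl

def contrRep {n m : ℕ} {u : TF n m} (hS : IsSchwartzTF u) (ω : E n) : SchwartzMap (E n) ℝ :=
  ∑ idx : Fin m → Fin n, (∏ j, ω (idx j)) • rep hS idx

lemma contrRep_eq {n m : ℕ} {u : TF n m} (hS : IsSchwartzTF u) (ω : E n) :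
    contr u (fun _ => ω) = ⇑(contrRep hS ω) := by
  funext x
  rw [contr, contrRep, schwartz_sum_apply]
  refine Finset.sum_congr rfl fun idx _ => ?_
  rw [SchwartzMap.smul_apply, smul_eq_mul, mul_comm, ← rep_spec hS idx]

lemma euclid_sum_single {n : ℕ} (w : E n) :
    ∑ k, w k • EuclideanSpace.single k (1:ℝ) = w := by
  ext j; rw [WithLp.ofLp_sum, Finset.sum_apply]; simp [EuclideanSpace.single_apply]

lemma sum_symz_mul {n M : ℕ} (T : (Fin M → Fin n) → ℝ) (ω : E n) :
    ∑ idx : Fin M → Fin n, symz T idx * ∏ j, ω (idx j)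
      = ∑ idx : Fin M → Fin n, T idx * ∏ j, ω (idx j) := by
  unfold symz
  have h1 : ∀ idx : Fin M → Fin n,
      ((M.factorial : ℝ)⁻¹ * ∑ σ : Equiv.Perm (Fin M), T (idx ∘ σ)) * ∏ j, ω (idx j)
        = (M.factorial : ℝ)⁻¹ * ∑ σ : Equiv.Perm (Fin M), T (idx ∘ σ) * ∏ j, ω (idx j) := by
    intro idx; rw [mul_assoc, Finset.sum_mul]
  simp_rw [h1, ← Finset.mul_sum]
  rw [Finset.sum_comm]
  have h2 : ∀ σ : Equiv.Perm (Fin M),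
      (∑ idx : Fin M → Fin n, T (idx ∘ σ) * ∏ j, ω (idx j))
        = ∑ idx : Fin M → Fin n, T idx * ∏ j, ω (idx j) := by
    intro σ
    have hbij : Function.Bijective (fun idx : Fin M → Fin n => idx ∘ ⇑σ) := by
      constructor
      · intro a b h
        funext j
        have h' := congrFun h (σ.symm j)
        simpa using h'
      · intro b
        exact ⟨b ∘ ⇑σ.symm, by funext j; simp⟩
    refine Fintype.sum_bijective _ hbij _ _ fun idx => ?_
    congr 1
    exact (Equiv.prod_comp σ fun j => ω (idx j)).symm
  simp_rw [h2]
  rw [Finset.sum_const, Finset.card_univ, Fintype.card_perm, Fintype.card_fin, nsmul_eq_mul, ← mul_assoc,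
    inv_mul_cancel₀ (by exact_mod_cast M.factorial_ne_zero), one_mul]

lemma contr_dsym {n m : ℕ} (u : TF n m) (hS : IsSchwartzTF u) (ω : E n) (x : E n) :
    contr (dsym u) (fun _ => ω) x = fderiv ℝ (contr u (fun _ => ω)) x ω := by
  rw [contrRep_eq hS ω]
  have hG : ∀ w : E n, fderiv ℝ (⇑(contrRep hS ω)) x w
      = ∑ idx : Fin m → Fin n, (∏ j, ω (idx j)) * fderiv ℝ (⇑(rep hS idx)) x w := by
    intro w
    rw [← pderivCLM_apply', contrRep, map_sum, schwartz_sum_apply]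
    refine Finset.sum_congr rfl fun idx _ => ?_
    rw [_root_.map_smul, SchwartzMap.smul_apply, pderivCLM_apply', smul_eq_mul]
  have hRHS : fderiv ℝ (⇑(contrRep hS ω)) x ω
      = ∑ k : Fin n, ∑ idx : Fin m → Fin n,
          (∏ j, ω (idx j)) * (ω k * fderiv ℝ (⇑(rep hS idx)) x (EuclideanSpace.single k 1)) := by
    have h0 : (fderiv ℝ (⇑(contrRep hS ω)) x) ω
        = (fderiv ℝ (⇑(contrRep hS ω)) x) (∑ k, ω k • EuclideanSpace.single k (1:ℝ)) := by
      rw [euclid_sum_single]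
    rw [h0, map_sum]
    refine Finset.sum_congr rfl fun k _ => ?_
    rw [_root_.map_smul, hG, smul_eq_mul, Finset.mul_sum]
    refine Finset.sum_congr rfl fun idx _ => ?_
    ring
  rw [hRHS]
  show (∑ idx : Fin (m+1) → Fin n, dsym u x idx * ∏ j, ω (idx j)) = _
  unfold dsym
  rw [sum_symz_mul]
  rw [← Equiv.sum_comp (Fin.snocEquiv (fun _ => Fin n))
    (fun idx => pd (idx (Fin.last m)) (fun y => u y (idx ∘ Fin.castSucc)) x * ∏ j, ω (idx j))]
  rw [Fintype.sum_prod_type]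
  refine Finset.sum_congr rfl fun k _ => ?_
  refine Finset.sum_congr rfl fun idx _ => ?_
  have h1 : (Fin.snocEquiv (fun _ => Fin n) (k, idx) : Fin (m+1) → Fin n) = Fin.snoc idx k := by
    funext j; rfl
  rw [h1]
  have h2 : (Fin.snoc idx k : Fin (m+1) → Fin n) (Fin.last m) = k := by simp
  have h3 : (Fin.snoc idx k : Fin (m+1) → Fin n) ∘ Fin.castSucc = idx := by
    funext j; simp
  have h4 : ∏ j : Fin (m+1), ω ((Fin.snoc idx k : Fin (m+1) → Fin n) j)
      = (∏ j : Fin m, ω (idx j)) * ω k := by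
    rw [Fin.prod_univ_castSucc]
    congr 1
    · exact Finset.prod_congr rfl fun i _ => by rw [Fin.snoc_castSucc]
    · rw [Fin.snoc_last]
  rw [h2, h3, h4]
  have h5 : pd k (fun y => u y idx) x
      = fderiv ℝ (⇑(rep hS idx)) x (EuclideanSpace.single k 1) := by
    rw [pd, rep_spec hS idx]
  rw [h5]; ring

lemma dsym_schwartz {n m : ℕ} {u : TF n m} (hS : IsSchwartzTF u) :
    IsSchwartzTF (dsym u) := by
  intro idx
  refine ⟨((m+1).factorial : ℝ)⁻¹ • ∑ σ : Equiv.Perm (Fin (m+1)),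
    LineDeriv.lineDerivOpCLM ℝ (SchwartzMap (E n) ℝ) (EuclideanSpace.single (idx (σ (Fin.last m))) (1:ℝ))
      (rep hS (idx ∘ σ ∘ Fin.castSucc)), ?_⟩
  funext x
  show symz (fun idx => pd (idx (Fin.last m)) (fun y => u y (idx ∘ Fin.castSucc)) x) idx = _
  rw [symz, SchwartzMap.smul_apply, smul_eq_mul, schwartz_sum_apply]
  congr 1
  refine Finset.sum_congr rfl fun σ _ => ?_
  rw [pderivCLM_apply', pd]
  have hc : (fun y => u y ((idx ∘ ⇑σ) ∘ Fin.castSucc)) = ⇑(rep hS (idx ∘ ⇑σ ∘ Fin.castSucc)) :=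
    rep_spec hS _
  rw [hc]
  rfl

-- orthogonality bound

lemma norm_le_comb {n : ℕ} (ω : E n) (q : ℝ) (y : ((ℝ ∙ ω)ᗮ : Submodule ℝ (E n))) :
    ‖(y : E n)‖ ≤ ‖q • ω + (y : E n)‖ := by
  have hmem : q • ω ∈ (ℝ ∙ ω) := Submodule.smul_mem _ q (Submodule.mem_span_singleton_self ω)
  have h0 : ⟪q • ω, (y : E n)⟫ = 0 := Submodule.inner_right_of_mem_orthogonal hmem y.2
  have hsq := norm_add_sq_real (q • ω) (y : E n)
  rw [h0] at hsq
  nlinarith [sq_nonneg ‖q • ω‖, norm_nonneg (q • ω + (y : E n)), norm_nonneg (y : E n)]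

lemma schwartz_decay_bound {n : ℕ} (ω : E n) (f : SchwartzMap (E n) ℝ) (k : ℕ) :
    ∃ C : ℝ, 0 ≤ C ∧ ∀ (q : ℝ) (y : ((ℝ ∙ ω)ᗮ : Submodule ℝ (E n))),
      ‖f (q • ω + (y : E n))‖ ≤ C * (1 + ‖(y : E n)‖) ^ (-(k:ℝ)) := by
  refine ⟨2 ^ k * (Finset.Iic (k, 0)).sup (fun m' => SchwartzMap.seminorm ℝ m'.1 m'.2) f,
    by positivity, fun q y => ?_⟩
  set z := q • ω + (y : E n) with hz
  have h1 : (1 + ‖z‖) ^ k * ‖f z‖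
      ≤ 2 ^ k * (Finset.Iic (k, 0)).sup (fun m' => SchwartzMap.seminorm ℝ m'.1 m'.2) f := by
    have := SchwartzMap.one_add_le_sup_seminorm_apply (𝕜 := ℝ) (m := (k, 0))
      (k := k) (n := 0) le_rfl le_rfl f z
    rwa [norm_iteratedFDeriv_zero] at this
  have h2 : (1 + ‖(y : E n)‖) ^ k * ‖f z‖ ≤ (1 + ‖z‖) ^ k * ‖f z‖ := by
    have := norm_le_comb ω q y
    gcongr
  have hpos : (0:ℝ) < (1 + ‖(y : E n)‖) ^ k := by positivity
  rw [Real.rpow_neg (by positivity), Real.rpow_natCast, mul_comm,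
    ← div_eq_inv_mul, le_div_iff₀ hpos]
  calc ‖f z‖ * (1 + ‖(y : E n)‖) ^ k = (1 + ‖(y : E n)‖) ^ k * ‖f z‖ := by ring
    _ ≤ _ := h2.trans h1

lemma integrable_schwartz_hyp {n : ℕ} (ω : E n) (f : SchwartzMap (E n) ℝ) (q : ℝ) :
    Integrable (fun y : ((ℝ ∙ ω)ᗮ : Submodule ℝ (E n)) => f (q • ω + (y : E n))) := by
  set V := ((ℝ ∙ ω)ᗮ : Submodule ℝ (E n))
  obtain ⟨C, hC0, hC⟩ := schwartz_decay_bound ω f (finrank ℝ V + 1)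
  have hint : Integrable (fun y : V => C * (1 + ‖y‖) ^ (-((finrank ℝ V + 1 : ℕ) : ℝ))) := by
    refine (integrable_one_add_norm ?_).const_mul C
    exact_mod_cast lt_add_one _
  refine hint.mono ?_ ?_
  · exact (f.continuous.comp (continuous_const.add continuous_subtype_val)).aestronglyMeasurable
  · refine Filter.Eventually.of_forall fun y => ?_
    have h := hC q y
    have hb : (0:ℝ) ≤ (1 + ‖(y : E n)‖) ^ (-((finrank ℝ V + 1 : ℕ) : ℝ)) := by positivity
    have hcoe : ‖(y : E n)‖ = ‖y‖ := rfl
    have hr : ‖C * (1 + ‖y‖) ^ (-((finrank ℝ V + 1 : ℕ) : ℝ))‖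
        = C * (1 + ‖y‖) ^ (-((finrank ℝ V + 1 : ℕ) : ℝ)) := by
      rw [Real.norm_eq_abs, abs_of_nonneg (mul_nonneg hC0 (by positivity))]
    rw [hr, ← hcoe]
    exact h

lemma hasDerivAt_hypInt' {n : ℕ} (ω : E n) (f : SchwartzMap (E n) ℝ) (p : ℝ) :
    HasDerivAt (fun q => ∫ y : ((ℝ ∙ ω)ᗮ : Submodule ℝ (E n)), f (q • ω + (y : E n)))
      (∫ y : ((ℝ ∙ ω)ᗮ : Submodule ℝ (E n)),
        (LineDeriv.lineDerivOpCLM ℝ (SchwartzMap (E n) ℝ) ω f) (p • ω + (y : E n))) p := by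
  set V := ((ℝ ∙ ω)ᗮ : Submodule ℝ (E n))
  set f' := LineDeriv.lineDerivOpCLM ℝ (SchwartzMap (E n) ℝ) ω f with hf'
  obtain ⟨C, hC0, hC⟩ := schwartz_decay_bound ω f' (finrank ℝ V + 1)
  have hbint : Integrable (fun y : V => C * (1 + ‖y‖) ^ (-((finrank ℝ V + 1 : ℕ) : ℝ))) := by
    refine (integrable_one_add_norm ?_).const_mul C
    exact_mod_cast lt_add_one _
  have h := hasDerivAt_integral_of_dominated_loc_of_deriv_le (μ := (volume : Measure V))
    (F := fun q (y : V) => f (q • ω + (y : E n)))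
    (F' := fun q (y : V) => f' (q • ω + (y : E n)))
    (x₀ := p) (s := Metric.ball p 1)
    (bound := fun y : V => C * (1 + ‖y‖) ^ (-((finrank ℝ V + 1 : ℕ) : ℝ)))
    (Metric.ball_mem_nhds p one_pos)
    (Filter.Eventually.of_forall fun q =>
      (f.continuous.comp (continuous_const.add continuous_subtype_val)).aestronglyMeasurable)
    (integrable_schwartz_hyp ω f p)
    ((f'.continuous.comp (continuous_const.add continuous_subtype_val)).aestronglyMeasurable)
    (Filter.Eventually.of_forall fun y q _ => by
      have h := hC q y
      have hcoe : ‖(y : E n)‖ = ‖y‖ := rfl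
      rw [hcoe] at h
      exact h)
    hbint
    (Filter.Eventually.of_forall fun y q _ => by
      have hline : HasDerivAt (fun q : ℝ => q • ω + (y : E n)) ω q := by
        simpa using ((hasDerivAt_id q).smul_const ω).add_const (y : E n)
      have hcomp := (f.differentiableAt.hasFDerivAt).comp_hasDerivAt q hline
      simpa [hf', pderivCLM_apply', SchwartzMap.lineDerivOp_apply_eq_fderiv, Function.comp_def] using hcomp)
  exact h.2

lemma dIter_schwartz {n m : ℕ} (v : TF n m) (hS : IsSchwartzTF v) :
    ∀ i, IsSchwartzTF (dIter i v)
  | 0 => hS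
  | (i+1) => dsym_schwartz (dIter_schwartz v hS i)

lemma key_lemma {n m : ℕ} (v : TF n m) (hS : IsSchwartzTF v) (ω : E n) (i : ℕ) :
    ∃ g : SchwartzMap (E n) ℝ, ⇑g = contr (dIter i v) (fun _ => ω) ∧
      (fun q => hypInt (⇑g) ω q) = iteratedDeriv i (fun q => TRT v ω q) := by
  induction i with
  | zero =>
      refine ⟨contrRep hS ω, (contrRep_eq hS ω).symm, ?_⟩
      rw [iteratedDeriv_zero]
      funext q
      rw [TRT, contrRep_eq hS ω]
  | succ i ih =>
      obtain ⟨g, hg, hint⟩ := ih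
      have hSi : IsSchwartzTF (dIter i v) := dIter_schwartz v hS i
      refine ⟨LineDeriv.lineDerivOpCLM ℝ (SchwartzMap (E n) ℝ) ω g, ?_, ?_⟩
      · funext x
        show LineDeriv.lineDerivOpCLM ℝ (SchwartzMap (E n) ℝ) ω g x = contr (dsym (dIter i v)) (fun _ => ω) x
        rw [contr_dsym (dIter i v) hSi ω x, ← hg, pderivCLM_apply']
      · rw [iteratedDeriv_succ, ← hint]
        funext p
        exact ((hasDerivAt_hypInt' ω g p).deriv).symm

/-- `𝒯^(m+i)(dⁱ v)(ω, p) = ∂ⁱ/∂pⁱ [𝒯^m v(ω, p)]` for a Schwartz symmetric tensor field `v`. -/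
theorem stmt9 {n m : ℕ} (v : TF n m) (hS : IsSchwartzTF v) (hsym : IsSymTF v)
    (i : ℕ) (ω : E n) (hω : ‖ω‖ = 1) (p : ℝ) :
    TRT (dIter i v) ω p = iteratedDeriv i (fun q => TRT v ω q) p := by
  obtain ⟨g, hg, hint⟩ := key_lemma v hS ω i
  have h1 : TRT (dIter i v) ω p = hypInt (⇑g) ω p := by rw [TRT, ← hg]
  rw [h1]
  exact congrFun hint p

end
end

section
/- If v is a divergence-free Schwartz vector field on ℝⁿ, then for every unit vector ω and every p ∈ ℝ, ∫_{H_{ω,p}} ⟨v(x), ω⟩ dx = 0, i.e., divergence-free vector fields lie in the kernel of the transversal Radon transform 𝒯¹. -/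
set_option maxHeartbeats 1000000


open MeasureTheory
open scoped RealInnerProductSpace
noncomputable section

section AuxLemmas

open Filter Topology

variable {D G' : Type*} [NormedAddCommGroup D] [NormedSpace ℝ D]
  [NormedAddCommGroup G'] [NormedSpace ℝ G']

lemma aux_schwartz_decay (g : SchwartzMap D G') (k : ℕ) :
    ∃ C : ℝ, 0 ≤ C ∧ ∀ x, (1 + ‖x‖) ^ k * ‖g x‖ ≤ C := by
  refine ⟨2 ^ k * ((Finset.Iic (k, 0)).sup fun m => SchwartzMap.seminorm ℝ m.1 m.2) g,
    mul_nonneg (by positivity) (apply_nonneg _ _), fun x => ?_⟩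
  simpa [norm_iteratedFDeriv_zero] using
    g.one_add_le_sup_seminorm_apply (𝕜 := ℝ) (m := (k, 0)) le_rfl le_rfl x

lemma aux_integral_fderiv_eq_zero {H : Type*} [NormedAddCommGroup H] [NormedSpace ℝ H]
    [MeasurableSpace H] [BorelSpace H] [FiniteDimensional ℝ H]
    (μ : Measure H) [μ.IsAddHaarMeasure] (f : H → ℝ) (u : H)
    (hf : Differentiable ℝ f) (h1 : Integrable f μ)
    (h2 : Integrable (fun x => fderiv ℝ f x u) μ) :
    ∫ x, fderiv ℝ f x u ∂μ = 0 := by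
  have h := integral_mul_fderiv_eq_neg_fderiv_mul_of_integrable (μ := μ)
    (f := fun _ : H => (1 : ℝ)) (g := f) (v := u)
    (by simpa using (integrable_zero H ℝ μ)) (by simpa using h2) (by simpa using h1)
    (fun x _ => differentiableAt_const 1) (fun x _ => hf x)
  simpa using h

end AuxLemmas

/-- Divergence-free Schwartz vector fields lie in the kernel of the transversal Radon
transform 𝒯¹. -/
theorem stmt11 {n : ℕ} (v : Fin n → E n → ℝ)
    (hS : ∀ i, ∃ g : SchwartzMap (E n) ℝ, v i = ⇑g)
    (hdiv : ∀ x, ∑ i, pd i (v i) x = 0)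
    (ω : E n) (hω : ‖ω‖ = 1) (p : ℝ) :
    hypInt (fun x => ∑ i, v i x * ω i) ω p = 0 := by
  classical
  choose g hg using hS
  unfold hypInt
  set W : Submodule ℝ (E n) := (ℝ ∙ ω)ᗮ with hWdef
  -- geometry
  have hωy : ∀ y : W, ⟪ω, (y : E n)⟫ = 0 := fun y =>
    Submodule.mem_orthogonal_singleton_iff_inner_right.mp y.2
  have hnsq : ∀ (t : ℝ) (y : W), ‖t • ω + (y : E n)‖ ^ 2 = t ^ 2 + ‖(y : E n)‖ ^ 2 := by
    intro t y
    rw [norm_add_sq_real, real_inner_smul_left, hωy y, norm_smul, hω]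
    simp [Real.norm_eq_abs, sq_abs]
  have hy_le : ∀ (t : ℝ) (y : W), ‖(y : E n)‖ ≤ ‖t • ω + (y : E n)‖ := by
    intro t y
    apply le_of_pow_le_pow_left₀ two_ne_zero (norm_nonneg _)
    rw [hnsq t y]; nlinarith [sq_nonneg t]
  have ht_le : ∀ (t : ℝ) (y : W), |t| ≤ ‖t • ω + (y : E n)‖ := by
    intro t y
    apply le_of_pow_le_pow_left₀ two_ne_zero (norm_nonneg _)
    rw [hnsq t y, sq_abs]; nlinarith [sq_nonneg ‖(y : E n)‖]
  set d' : ℕ := Module.finrank ℝ W + 1 with hd'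
  set d : ℕ := d' + 1 with hd
  -- integrable weights
  have int_pow : ∀ k : ℕ, Module.finrank ℝ W < k →
      Integrable (fun y : W => ((1 + ‖(y : E n)‖) ^ k)⁻¹) := by
    intro k hk
    have h := integrable_one_add_norm (E := W) (μ := volume) (r := (k : ℝ))
      (by exact_mod_cast hk)
    have e : (fun y : W => (1 + ‖y‖) ^ (-(k : ℝ))) =
        fun y : W => ((1 + ‖(y : E n)‖) ^ k)⁻¹ := by
      funext y
      rw [Real.rpow_neg (by positivity), Real.rpow_natCast]
      rfl
    rw [e] at h; exact h
  -- master integrability criterion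
  have master : ∀ (φ : E n → ℝ) (C : ℝ), Continuous φ →
      (∀ x, (1 + ‖x‖) ^ d * ‖φ x‖ ≤ C) → ∀ t : ℝ,
      Integrable (fun y : W => φ (t • ω + (y : E n))) := by
    intro φ C hc hb t
    have hmeas : AEStronglyMeasurable (fun y : W => φ (t • ω + (y : E n))) volume :=
      (hc.comp (continuous_const.add continuous_subtype_val)).aestronglyMeasurable
    refine ((int_pow d (by omega)).const_mul C).mono' hmeas
      (Filter.Eventually.of_forall fun y => ?_)
    have h1 : (0 : ℝ) < 1 + ‖(y : E n)‖ := by positivity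
    have h2 : (1 + ‖(y : E n)‖) ^ d ≤ (1 + ‖t • ω + (y : E n)‖) ^ d :=
      pow_le_pow_left₀ h1.le (by linarith [hy_le t y]) d
    have h3 : ‖φ (t • ω + (y : E n))‖ * (1 + ‖(y : E n)‖) ^ d ≤ C := by
      calc ‖φ (t • ω + (y : E n))‖ * (1 + ‖(y : E n)‖) ^ d
          ≤ ‖φ (t • ω + (y : E n))‖ * (1 + ‖t • ω + (y : E n)‖) ^ d :=
            mul_le_mul_of_nonneg_left h2 (norm_nonneg _)
        _ ≤ C := by rw [mul_comm]; exact hb _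
    have e : C * ((1 + ‖(y : E n)‖) ^ d)⁻¹ = C / (1 + ‖(y : E n)‖) ^ d :=
      (div_eq_mul_inv _ _).symm
    rw [e, le_div_iff₀ (by positivity)]
    exact h3
  -- decay constants
  have hCg := fun i => aux_schwartz_decay (g i) d
  choose C hC0 hC using hCg
  have hCf := fun i => aux_schwartz_decay (SchwartzMap.fderivCLM ℝ (E n) ℝ (g i)) d
  choose C' hC'0 hC' using hCf
  have hC'' : ∀ i x, (1 + ‖x‖) ^ d * ‖fderiv ℝ ⇑(g i) x‖ ≤ C' i := by
    intro i x; simpa [SchwartzMap.fderivCLM_apply] using hC' i x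
  have hcontf : ∀ i (u : E n), Continuous fun x => fderiv ℝ ⇑(g i) x u := by
    intro i u
    have h1 : Continuous fun x => (SchwartzMap.fderivCLM ℝ (E n) ℝ (g i)) x :=
      (SchwartzMap.fderivCLM ℝ (E n) ℝ (g i)).continuous
    have h2 := (ContinuousLinearMap.apply ℝ ℝ u).continuous.comp h1
    simpa [SchwartzMap.fderivCLM_apply, Function.comp_def] using h2
  -- integrability of g and derivatives
  have int_g : ∀ i (t : ℝ), Integrable (fun y : W => g i (t • ω + (y : E n))) :=
    fun i t => master _ (C i) (g i).continuous (hC i) t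
  have int_dg : ∀ i (u : E n) (t : ℝ),
      Integrable (fun y : W => fderiv ℝ ⇑(g i) (t • ω + (y : E n)) u) := by
    intro i u t
    refine master _ (C' i * ‖u‖) (hcontf i u) (fun x => ?_) t
    calc (1 + ‖x‖) ^ d * ‖fderiv ℝ ⇑(g i) x u‖
        ≤ (1 + ‖x‖) ^ d * (‖fderiv ℝ ⇑(g i) x‖ * ‖u‖) := by
          have := (fderiv ℝ ⇑(g i) x).le_opNorm u
          have hp : (0:ℝ) ≤ (1 + ‖x‖) ^ d := by positivity
          exact mul_le_mul_of_nonneg_left this hp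
      _ = ((1 + ‖x‖) ^ d * ‖fderiv ℝ ⇑(g i) x‖) * ‖u‖ := by ring
      _ ≤ C' i * ‖u‖ := mul_le_mul_of_nonneg_right (hC'' i x) (norm_nonneg u)
  -- bound for derivative integrand, uniform in t
  have bd_key : ∀ i (t : ℝ) (y : W),
      ‖fderiv ℝ ⇑(g i) (t • ω + (y : E n)) ω‖ ≤ C' i * ((1 + ‖(y : E n)‖) ^ d)⁻¹ := by
    intro i t y
    have h1 : (0 : ℝ) < (1 + ‖(y : E n)‖) ^ d := by positivity
    have e : C' i * ((1 + ‖(y : E n)‖) ^ d)⁻¹ = C' i / (1 + ‖(y : E n)‖) ^ d :=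
      (div_eq_mul_inv _ _).symm
    rw [e, le_div_iff₀ h1]
    have h2 : (1 + ‖(y : E n)‖) ^ d ≤ (1 + ‖t • ω + (y : E n)‖) ^ d :=
      pow_le_pow_left₀ (by positivity) (by linarith [hy_le t y]) d
    calc ‖fderiv ℝ ⇑(g i) (t • ω + (y : E n)) ω‖ * (1 + ‖(y : E n)‖) ^ d
        ≤ (‖fderiv ℝ ⇑(g i) (t • ω + (y : E n))‖ * ‖ω‖) * (1 + ‖(y : E n)‖) ^ d :=
          mul_le_mul_of_nonneg_right ((fderiv ℝ ⇑(g i) _).le_opNorm ω) h1.le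
      _ = ‖fderiv ℝ ⇑(g i) (t • ω + (y : E n))‖ * (1 + ‖(y : E n)‖) ^ d := by
          rw [hω, mul_one]
      _ ≤ ‖fderiv ℝ ⇑(g i) (t • ω + (y : E n))‖ * (1 + ‖t • ω + (y : E n)‖) ^ d :=
          mul_le_mul_of_nonneg_left h2 (norm_nonneg _)
      _ ≤ C' i := by rw [mul_comm]; exact hC'' i _
  -- differentiation under the integral sign
  have hasD : ∀ i (t : ℝ),
      HasDerivAt (fun s : ℝ => ∫ y : W, g i (s • ω + (y : E n)))
        (∫ y : W, fderiv ℝ ⇑(g i) (t • ω + (y : E n)) ω) t := by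
    intro i t
    have hdiff : ∀ (y : W) (s : ℝ), s ∈ Metric.ball t 1 →
        HasDerivAt (fun s : ℝ => g i (s • ω + (y : E n)))
          (fderiv ℝ ⇑(g i) (s • ω + (y : E n)) ω) s := by
      intro y s _
      have hline : HasDerivAt (fun s : ℝ => s • ω + (y : E n)) ω s := by
        simpa using ((hasDerivAt_id s).smul_const ω).add_const (y : E n)
      exact (((g i).differentiable _).hasFDerivAt).comp_hasDerivAt s hline
    have h := hasDerivAt_integral_of_dominated_loc_of_deriv_le (μ := (volume : Measure W))
      (F := fun (s : ℝ) (y : W) => g i (s • ω + (y : E n)))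
      (F' := fun (s : ℝ) (y : W) => fderiv ℝ ⇑(g i) (s • ω + (y : E n)) ω)
      (x₀ := t) (s := Metric.ball t 1)
      (bound := fun y : W => C' i * ((1 + ‖(y : E n)‖) ^ d)⁻¹)
      (Metric.ball_mem_nhds t one_pos)
      (Filter.Eventually.of_forall fun s =>
        ((g i).continuous.comp (continuous_const.add continuous_subtype_val)).aestronglyMeasurable)
      (int_g i t)
      ((hcontf i ω).comp (continuous_const.add continuous_subtype_val)).aestronglyMeasurable
      (Filter.Eventually.of_forall fun y s _ => bd_key i s y)
      ((int_pow d (by omega)).const_mul (C' i))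
      (Filter.Eventually.of_forall fun y s hs => hdiff y s hs)
    exact h.2
  -- membership of tangential directions
  have tmem : ∀ i : Fin n, EuclideanSpace.single i (1:ℝ) - ω i • ω ∈ W := by
    intro i
    apply Submodule.mem_orthogonal_singleton_iff_inner_right.mpr
    have h1 : ⟪ω, EuclideanSpace.single i (1:ℝ)⟫ = ω i := by
      simp [EuclideanSpace.inner_single_right]
    have h2 : ⟪ω, ω⟫ = 1 := by
      rw [real_inner_self_eq_norm_mul_norm, hω, one_mul]
    rw [inner_sub_right, real_inner_smul_right, h1, h2]; ring
  -- the main function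
  set Fn : ℝ → ℝ := fun t => ∑ i, ω i * ∫ y : W, g i (t • ω + (y : E n)) with hFn
  -- the derivative vanishes
  have deriv_zero : ∀ t : ℝ,
      (∑ i, ω i * ∫ y : W, fderiv ℝ ⇑(g i) (t • ω + (y : E n)) ω) = 0 := by
    intro t
    have key : ∀ i : Fin n,
        ω i * ∫ y : W, fderiv ℝ ⇑(g i) (t • ω + (y : E n)) ω
          = ∫ y : W, fderiv ℝ ⇑(g i) (t • ω + (y : E n)) (EuclideanSpace.single i (1:ℝ)) := by
      intro i
      have hzero : (∫ y : W, fderiv ℝ ⇑(g i) (t • ω + (y : E n))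
          (EuclideanSpace.single i (1:ℝ) - ω i • ω)) = 0 := by
        set u : W := ⟨EuclideanSpace.single i (1:ℝ) - ω i • ω, tmem i⟩ with hu
        have hA : ∀ y : W, HasFDerivAt (fun z : W => t • ω + (z : E n)) (W.subtypeL) y :=
          fun y => (W.subtypeL.hasFDerivAt).const_add (t • ω)
        have hfd : ∀ y : W, HasFDerivAt (fun z : W => g i (t • ω + (z : E n)))
            ((fderiv ℝ ⇑(g i) (t • ω + (y : E n))).comp W.subtypeL) y :=
          fun y => (((g i).differentiable _).hasFDerivAt).comp y (hA y)
        have e : (fun y : W => fderiv ℝ (fun z : W => g i (t • ω + (z : E n))) y u)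
            = fun y : W => fderiv ℝ ⇑(g i) (t • ω + (y : E n))
                (EuclideanSpace.single i (1:ℝ) - ω i • ω) := by
          funext y; rw [(hfd y).fderiv]; rfl
        have h0 := aux_integral_fderiv_eq_zero (volume : Measure W)
          (fun z : W => g i (t • ω + (z : E n))) u
          (fun y => (hfd y).differentiableAt) (int_g i t)
          (by rw [e]; exact int_dg i _ t)
        rw [e] at h0
        exact h0
      have hsub : ∀ y : W,
          ω i * fderiv ℝ ⇑(g i) (t • ω + (y : E n)) ω
            = fderiv ℝ ⇑(g i) (t • ω + (y : E n)) (EuclideanSpace.single i (1:ℝ))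
              - fderiv ℝ ⇑(g i) (t • ω + (y : E n))
                  (EuclideanSpace.single i (1:ℝ) - ω i • ω) := by
        intro y
        have hmap := (fderiv ℝ ⇑(g i) (t • ω + (y : E n))).map_sub
          (EuclideanSpace.single i (1:ℝ)) (ω i • ω)
        have hsmul := (fderiv ℝ ⇑(g i) (t • ω + (y : E n))).map_smul (ω i) ω
        rw [hmap, hsmul, smul_eq_mul]
        ring
      calc ω i * ∫ y : W, fderiv ℝ ⇑(g i) (t • ω + (y : E n)) ω
          = ∫ y : W, ω i * fderiv ℝ ⇑(g i) (t • ω + (y : E n)) ω :=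
            (integral_const_mul _ _).symm
        _ = ∫ y : W, (fderiv ℝ ⇑(g i) (t • ω + (y : E n)) (EuclideanSpace.single i (1:ℝ))
              - fderiv ℝ ⇑(g i) (t • ω + (y : E n))
                  (EuclideanSpace.single i (1:ℝ) - ω i • ω)) :=
            integral_congr_ae (Filter.Eventually.of_forall hsub)
        _ = (∫ y : W, fderiv ℝ ⇑(g i) (t • ω + (y : E n)) (EuclideanSpace.single i (1:ℝ)))
              - ∫ y : W, fderiv ℝ ⇑(g i) (t • ω + (y : E n))
                  (EuclideanSpace.single i (1:ℝ) - ω i • ω) :=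
            integral_sub (int_dg i _ t) (int_dg i _ t)
        _ = ∫ y : W, fderiv ℝ ⇑(g i) (t • ω + (y : E n)) (EuclideanSpace.single i (1:ℝ)) := by
            rw [hzero, sub_zero]
    calc (∑ i, ω i * ∫ y : W, fderiv ℝ ⇑(g i) (t • ω + (y : E n)) ω)
        = ∑ i, ∫ y : W, fderiv ℝ ⇑(g i) (t • ω + (y : E n)) (EuclideanSpace.single i (1:ℝ)) :=
          Finset.sum_congr rfl fun i _ => key i
      _ = ∫ y : W, ∑ i, fderiv ℝ ⇑(g i) (t • ω + (y : E n)) (EuclideanSpace.single i (1:ℝ)) :=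
          (integral_finset_sum _ fun i _ => int_dg i _ t).symm
      _ = 0 := by
          have hz : ∀ y : W,
              (∑ i, fderiv ℝ ⇑(g i) (t • ω + (y : E n)) (EuclideanSpace.single i (1:ℝ))) = 0 := by
            intro y
            have h := hdiv (t • ω + (y : E n))
            simp only [pd, hg] at h
            exact h
          rw [integral_congr_ae (Filter.Eventually.of_forall hz), integral_zero]
  -- Fn has derivative zero everywhere, hence is constant
  have hFn_deriv : ∀ t : ℝ, HasDerivAt Fn 0 t := by
    intro t
    have h := HasDerivAt.sum (fun i (_ : i ∈ (Finset.univ : Finset (Fin n))) =>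
      (hasD i t).const_mul (ω i))
    rw [deriv_zero t] at h
    have e : Fn = ∑ i : Fin n, fun s : ℝ => ω i * ∫ y : W, g i (s • ω + (y : E n)) := by
      ext s; simp [hFn, Finset.sum_apply]
    rw [e]; exact h
  have hconst : ∀ t : ℝ, Fn t = Fn 0 := fun t =>
    is_const_of_deriv_eq_zero (fun s => (hFn_deriv s).differentiableAt)
      (fun s => (hFn_deriv s).deriv) t 0
  -- decay bound
  set I : ℝ := ∫ y : W, ((1 + ‖(y : E n)‖) ^ d')⁻¹ with hI
  have bndF : ∀ t : ℝ, |Fn t| ≤ (1 + |t|)⁻¹ * ∑ i, |ω i| * (C i * I) := by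
    intro t
    have h1t : (0:ℝ) < 1 + |t| := by positivity
    have hterm : ∀ i : Fin n,
        |∫ y : W, g i (t • ω + (y : E n))| ≤ (1 + |t|)⁻¹ * (C i * I) := by
      intro i
      have hb : ∀ y : W, ‖g i (t • ω + (y : E n))‖ ≤
          (C i * (1 + |t|)⁻¹) * ((1 + ‖(y : E n)‖) ^ d')⁻¹ := by
        intro y
        have h2 : (0:ℝ) < (1 + ‖(y : E n)‖) ^ d' := by positivity
        have key : (1 + |t|) * (1 + ‖(y : E n)‖) ^ d' ≤ (1 + ‖t • ω + (y : E n)‖) ^ d := by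
          have ha : (1:ℝ) + |t| ≤ 1 + ‖t • ω + (y : E n)‖ := by linarith [ht_le t y]
          have hbb : (1 + ‖(y : E n)‖) ^ d' ≤ (1 + ‖t • ω + (y : E n)‖) ^ d' :=
            pow_le_pow_left₀ (by positivity) (by linarith [hy_le t y]) d'
          calc (1 + |t|) * (1 + ‖(y : E n)‖) ^ d'
              ≤ (1 + ‖t • ω + (y : E n)‖) * (1 + ‖t • ω + (y : E n)‖) ^ d' :=
                mul_le_mul ha hbb (by positivity) (by positivity)
            _ = (1 + ‖t • ω + (y : E n)‖) ^ d := by rw [hd, pow_succ]; ring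
        have h3 : ‖g i (t • ω + (y : E n))‖ * ((1 + |t|) * (1 + ‖(y : E n)‖) ^ d') ≤ C i := by
          calc ‖g i (t • ω + (y : E n))‖ * ((1 + |t|) * (1 + ‖(y : E n)‖) ^ d')
              ≤ ‖g i (t • ω + (y : E n))‖ * (1 + ‖t • ω + (y : E n)‖) ^ d :=
                mul_le_mul_of_nonneg_left key (norm_nonneg _)
            _ ≤ C i := by rw [mul_comm]; exact hC i _
        have e : (C i * (1 + |t|)⁻¹) * ((1 + ‖(y : E n)‖) ^ d')⁻¹
            = C i / ((1 + |t|) * (1 + ‖(y : E n)‖) ^ d') := by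
          rw [div_eq_mul_inv, mul_inv]; ring
        rw [e, le_div_iff₀ (by positivity)]
        exact h3
      have hnorm := norm_integral_le_of_norm_le
        (((int_pow d' (by omega)).const_mul (C i * (1 + |t|)⁻¹)))
        (Filter.Eventually.of_forall hb)
      rw [integral_const_mul] at hnorm
      calc |∫ y : W, g i (t • ω + (y : E n))|
          ≤ C i * (1 + |t|)⁻¹ * I := hnorm
        _ = (1 + |t|)⁻¹ * (C i * I) := by ring
    calc |Fn t| ≤ ∑ i, |ω i * ∫ y : W, g i (t • ω + (y : E n))| :=
          Finset.abs_sum_le_sum_abs _ _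
      _ ≤ ∑ i, |ω i| * ((1 + |t|)⁻¹ * (C i * I)) := by
          apply Finset.sum_le_sum
          intro i _
          rw [abs_mul]
          exact mul_le_mul_of_nonneg_left (hterm i) (abs_nonneg _)
      _ = (1 + |t|)⁻¹ * ∑ i, |ω i| * (C i * I) := by
          rw [Finset.mul_sum]
          exact Finset.sum_congr rfl fun i _ => by ring
  -- conclude Fn p = 0
  have hzeroF : Fn p = 0 := by
    have h1 := tendsto_one_div_add_atTop_nhds_zero_nat.mul_const (∑ i, |ω i| * (C i * I))
    rw [zero_mul] at h1
    have h2 : (fun m : ℕ => 1 / ((m : ℝ) + 1) * ∑ i, |ω i| * (C i * I))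
        = fun m : ℕ => (1 + |(m : ℝ)|)⁻¹ * ∑ i, |ω i| * (C i * I) := by
      funext m
      rw [abs_of_nonneg (Nat.cast_nonneg m), one_div, add_comm]
    rw [h2] at h1
    have hle : ∀ m : ℕ, |Fn p| ≤ (1 + |(m : ℝ)|)⁻¹ * ∑ i, |ω i| * (C i * I) := by
      intro m
      rw [hconst p, ← hconst ((m : ℕ) : ℝ)]
      exact bndF _
    have h3 : |Fn p| ≤ 0 := ge_of_tendsto' h1 hle
    exact abs_eq_zero.mp (le_antisymm h3 (abs_nonneg _))
  -- identify the goal with Fn p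
  calc (∫ y : W, ∑ i, v i (p • ω + (y : E n)) * ω i)
      = ∑ i, ∫ y : W, v i (p • ω + (y : E n)) * ω i := by
        apply integral_finset_sum
        intro i _
        simp only [hg]
        exact (int_g i p).mul_const _
    _ = ∑ i, ω i * ∫ y : W, g i (p • ω + (y : E n)) := by
        apply Finset.sum_congr rfl
        intro i _
        simp only [hg]
        rw [integral_mul_const, mul_comm]
    _ = Fn p := rfl
    _ = 0 := hzeroF


end
end

section
/- Let f = dv, where v is a Schwartz symmetric (m−1)-tensor field on ℝⁿ. Then the longitudinal Radon transform of f vanishes: for every unit vector ω, orthonormal basis ω₁,...,ω_{n−1} of ω^⊥, p ∈ ℝ, and nonnegative integers ℓ₁,...,ℓ_{n−1} summing to m, ∫_{H_{ω,p}} ⟨(dv)(x), ω₁^{⊙ℓ₁} ⊙ ··· ⊙ ω_{n−1}^{⊙ℓ_{n−1}}⟩ dx = 0. -/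
open MeasureTheory
open scoped RealInnerProductSpace
noncomputable section

/-- Temperate growth of an affine map. -/
lemma affine_hasTemperateGrowth {V W : Type*} [NormedAddCommGroup V] [NormedSpace ℝ V]
    [NormedAddCommGroup W] [NormedSpace ℝ W] (c : W) (L : V →L[ℝ] W) :
    Function.HasTemperateGrowth (fun y : V => c + L y) := by
  apply Function.HasTemperateGrowth.of_fderiv (k := 1) (C := ‖c‖ + ‖L‖)
  · have h : (fderiv ℝ fun y : V => c + L y) = fun _ => (L : V →L[ℝ] W) := by
      funext y
      rw [fderiv_const_add]
      exact L.fderiv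
    rw [h]
    exact .const _
  · exact (L.differentiable).const_add c
  · intro x
    have h1 : ‖c + L x‖ ≤ ‖c‖ + ‖L‖ * ‖x‖ := by
      refine (norm_add_le _ _).trans ?_
      gcongr
      exact L.le_opNorm x
    have h2 : (0:ℝ) ≤ ‖x‖ := norm_nonneg x
    have h3 : (0:ℝ) ≤ ‖c‖ := norm_nonneg c
    have h4 : (0:ℝ) ≤ ‖L‖ := norm_nonneg L
    rw [pow_one]
    nlinarith

/-- The integral over a finite-dimensional space of a directional derivative of a Schwartz
function vanishes. -/
lemma integral_fderiv_schwartz_eq_zero {V : Type*} [NormedAddCommGroup V] [NormedSpace ℝ V]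
    [FiniteDimensional ℝ V] [MeasurableSpace V] [BorelSpace V] (μ : Measure V)
    [μ.IsAddHaarMeasure] (h : SchwartzMap V ℝ) (a : V) :
    ∫ y, fderiv ℝ (⇑h) y a ∂μ = 0 := by
  classical
  set g : SchwartzMap V ℝ := SchwartzMap.evalCLM (𝕜 := ℝ) (E := V) (G := ℝ) a (SchwartzMap.fderivCLM ℝ V ℝ h) with hgdef
  have hgcoe : ∀ y, fderiv ℝ (⇑h) y a = g y := fun y => rfl
  set K : ℕ := Module.finrank ℝ V + 1 with hK
  set S : ℝ := 2 ^ K * ((Finset.Iic ((K : ℕ), (0 : ℕ))).sup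
      fun m' => SchwartzMap.seminorm ℝ m'.1 m'.2) g with hSdef
  have hS0 : 0 ≤ S := by
    rw [hSdef]
    positivity
  have hgbound : ∀ z : V, ‖g z‖ ≤ S * ((1 + ‖z‖) ^ K)⁻¹ := by
    intro z
    have hb := SchwartzMap.one_add_le_sup_seminorm_apply (𝕜 := ℝ) (m := ((K : ℕ), (0 : ℕ)))
      le_rfl le_rfl g z
    rw [norm_iteratedFDeriv_zero] at hb
    have h1 : (0:ℝ) < (1 + ‖z‖) ^ K := by positivity
    rw [← div_eq_mul_inv, le_div_iff₀ h1]
    calc ‖g z‖ * (1 + ‖z‖) ^ K = (1 + ‖z‖) ^ K * ‖g z‖ := by ring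
    _ ≤ S := hb
  set B : V → ℝ := fun y => (S * (1 + ‖a‖) ^ K) * (1 + ‖y‖) ^ (-(K : ℝ)) with hBdef
  have hBint : Integrable B μ := by
    apply Integrable.const_mul
    apply integrable_one_add_norm
    exact_mod_cast Nat.lt_succ_self _
  have hbd : ∀ y : V, ∀ t : ℝ, |t| < 1 → ‖g (y + t • a)‖ ≤ B y := by
    intro y t ht
    have h1 : (0:ℝ) < 1 + ‖y + t • a‖ := by positivity
    have h2 : (0:ℝ) < 1 + ‖y‖ := by positivity
    have hkey : (1 + ‖y‖) ≤ (1 + ‖a‖) * (1 + ‖y + t • a‖) := by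
      have h3 : ‖y‖ ≤ ‖y + t • a‖ + ‖a‖ := by
        have h4 : ‖y‖ ≤ ‖y + t • a‖ + ‖t • a‖ := by
          have := norm_sub_le (y + t • a) (t • a)
          simpa using this
        have h5 : ‖t • a‖ ≤ ‖a‖ := by
          rw [norm_smul, Real.norm_eq_abs]
          calc |t| * ‖a‖ ≤ 1 * ‖a‖ := mul_le_mul_of_nonneg_right ht.le (norm_nonneg a)
          _ = ‖a‖ := one_mul _
        linarith
      nlinarith [norm_nonneg a, norm_nonneg (y + t • a)]
    have hmono : ((1 + ‖y + t • a‖) ^ K)⁻¹ ≤ (1 + ‖a‖) ^ K * ((1 + ‖y‖) ^ K)⁻¹ := by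
      have hp1 : (0:ℝ) < (1 + ‖y + t • a‖) ^ K := by positivity
      have hp2 : (0:ℝ) < (1 + ‖y‖) ^ K := by positivity
      rw [← div_eq_mul_inv, le_div_iff₀ hp2, inv_mul_eq_div, div_le_iff₀ hp1, ← mul_pow]
      exact pow_le_pow_left₀ h2.le hkey K
    have hrw : (1 + ‖y‖) ^ (-(K : ℝ)) = ((1 + ‖y‖) ^ K)⁻¹ := by
      rw [← Real.rpow_natCast (1 + ‖y‖) K, ← Real.rpow_neg h2.le]
    calc ‖g (y + t • a)‖ ≤ S * ((1 + ‖y + t • a‖) ^ K)⁻¹ := hgbound _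
    _ ≤ S * ((1 + ‖a‖) ^ K * ((1 + ‖y‖) ^ K)⁻¹) := by gcongr
    _ = (S * (1 + ‖a‖) ^ K) * (1 + ‖y‖) ^ (-(K : ℝ)) := by rw [hrw]; ring
  have key := hasDerivAt_integral_of_dominated_loc_of_deriv_le (μ := μ)
      (F := fun (t : ℝ) (y : V) => h (y + t • a))
      (F' := fun (t : ℝ) (y : V) => g (y + t • a)) (x₀ := 0) (bound := B) (s := Metric.ball 0 1) (Metric.ball_mem_nhds 0 one_pos)
      (Filter.Eventually.of_forall fun t =>
        ((h.continuous.comp (continuous_id.add continuous_const)).aestronglyMeasurable))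
      (by simpa using h.integrable (μ := μ))
      ((g.continuous.comp (continuous_id.add continuous_const)).aestronglyMeasurable)
      (Filter.Eventually.of_forall fun y => by
        intro t ht
        rw [Metric.mem_ball, dist_zero_right, Real.norm_eq_abs] at ht
        exact hbd y t ht)
      hBint
      (Filter.Eventually.of_forall fun y => by
        intro t _
        have h1 : HasDerivAt (fun s : ℝ => y + s • a) a t := by
          simpa using ((hasDerivAt_id t).smul_const a).const_add y
        have h2 : HasFDerivAt (⇑h) (fderiv ℝ (⇑h) (y + t • a)) (y + t • a) :=
          (h.differentiable (y + t • a)).hasFDerivAt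
        have h3 := h2.comp_hasDerivAt t h1
        simpa [Function.comp_def, hgcoe] using h3)
  have hconst : (fun t : ℝ => ∫ y, h (y + t • a) ∂μ) = fun _ => ∫ y, h y ∂μ := by
    funext t
    exact integral_add_right_eq_self _ _
  have h0 : HasDerivAt (fun t : ℝ => ∫ y, h (y + t • a) ∂μ) 0 0 := by
    rw [hconst]
    exact hasDerivAt_const _ _
  have hu := key.2.unique h0
  simp only [zero_smul, add_zero] at hu
  simp only [hgcoe]
  exact hu

/-- Integral over a hyperplane of a tangential derivative of a Schwartz function vanishes. -/
lemma hyp_deriv_zero {n : ℕ} (g : SchwartzMap (E n) ℝ) (ω : E n) (p : ℝ) (a : E n)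
    (ha : a ∈ (ℝ ∙ ω)ᗮ) :
    ∃ h₂ : SchwartzMap ((ℝ ∙ ω)ᗮ : Submodule ℝ (E n)) ℝ,
      (fun y : ((ℝ ∙ ω)ᗮ : Submodule ℝ (E n)) => fderiv ℝ (⇑g) (p • ω + ↑y) a) = ⇑h₂ ∧
      ∫ y : ((ℝ ∙ ω)ᗮ : Submodule ℝ (E n)), fderiv ℝ (⇑g) (p • ω + ↑y) a = 0 := by
  set V : Submodule ℝ (E n) := (ℝ ∙ ω)ᗮ with hV
  set L : V →L[ℝ] E n := V.subtypeL with hL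
  have htg : Function.HasTemperateGrowth (fun y : V => p • ω + L y) :=
    affine_hasTemperateGrowth _ _
  have hupper : ∃ (k : ℕ) (C : ℝ), ∀ y : V, ‖y‖ ≤ C * (1 + ‖p • ω + L y‖) ^ k := by
    refine ⟨1, 1 + ‖p • ω‖, fun y => ?_⟩
    have h1 : ‖(y : E n)‖ ≤ ‖p • ω + (y : E n)‖ + ‖p • ω‖ := by
      have := norm_sub_le (p • ω + (y : E n)) (p • ω)
      simpa using this
    have h2 : ‖y‖ = ‖(y : E n)‖ := rfl
    have h3 : (0:ℝ) ≤ ‖p • ω‖ := norm_nonneg _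
    have h4 : (0:ℝ) ≤ ‖p • ω + (y : E n)‖ := norm_nonneg _
    have h5 : L y = (y : E n) := rfl
    rw [pow_one, h2, h5]
    nlinarith
  set h : SchwartzMap V ℝ := SchwartzMap.compCLM ℝ htg hupper g with hh
  have hcoe : ∀ y : V, h y = g (p • ω + ↑y) := fun y => rfl
  have hfd : ∀ y : V, fderiv ℝ (⇑g) (p • ω + ↑y) a = fderiv ℝ (⇑h) y ⟨a, ha⟩ := by
    intro y
    have hA : HasFDerivAt (fun y : V => p • ω + L y) L y := (L.hasFDerivAt).const_add _
    have hg' : HasFDerivAt (⇑g) (fderiv ℝ (⇑g) (p • ω + L y)) (p • ω + L y) :=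
      (g.differentiable _).hasFDerivAt
    have hcomp : HasFDerivAt (⇑h) ((fderiv ℝ (⇑g) (p • ω + L y)).comp L) y := hg'.comp y hA
    rw [hcomp.fderiv]
    rfl
  refine ⟨SchwartzMap.evalCLM (𝕜 := ℝ) (E := V) (G := ℝ) (⟨a, ha⟩ : V) (SchwartzMap.fderivCLM ℝ V ℝ h), ?_, ?_⟩
  · funext y
    rw [hfd y]
    rfl
  · simp_rw [hfd]
    exact integral_fderiv_schwartz_eq_zero volume h ⟨a, ha⟩

lemma aux_swap {ι κ : Type*} [Fintype ι] [Fintype κ] (c : ℝ) (A : κ → ι → ℝ) (P : ι → ℝ) :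
    ∑ idx : ι, (c * ∑ σ : κ, A σ idx) * P idx = c * ∑ σ : κ, ∑ idx : ι, A σ idx * P idx := by
  simp_rw [mul_assoc, Finset.sum_mul, Finset.mul_sum]
  exact Finset.sum_comm

lemma euclid_decomp {n : ℕ} (w : E n) :
    w = ∑ k : Fin n, w k • EuclideanSpace.single k (1:ℝ) := by
  ext j
  rw [WithLp.ofLp_sum, Finset.sum_apply]
  simp [EuclideanSpace.single_apply]

lemma sum_pd_eq_fderiv {n : ℕ} (g : E n → ℝ) (x : E n) (w : E n) :
    ∑ k : Fin n, pd k g x * w k = fderiv ℝ g x w := by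
  conv_rhs => rw [euclid_decomp w]
  rw [map_sum]
  simp only [_root_.map_smul, smul_eq_mul, pd]
  exact Finset.sum_congr rfl fun k _ => by ring

set_option maxHeartbeats 1000000 in
lemma contr_dsym_eq {n m : ℕ} (v : TF n m) (u : Fin (m+1) → E n)
    (G : (Fin m → Fin n) → SchwartzMap (E n) ℝ)
    (hG : ∀ q, (fun x => v x q) = ⇑(G q)) (x : E n) :
    contr (dsym v) u x = ((m+1).factorial : ℝ)⁻¹ *
      ∑ σ : Equiv.Perm (Fin (m+1)), ∑ q : Fin m → Fin n,
        (∏ j : Fin m, u (σ j.castSucc) (q j)) * fderiv ℝ (⇑(G q)) x (u (σ (Fin.last m))) := by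
  classical
  set T : (Fin (m+1) → Fin n) → ℝ :=
    fun κ => pd (κ (Fin.last m)) (fun y => v y (κ ∘ Fin.castSucc)) x with hT
  have step1 : contr (dsym v) u x = ((m+1).factorial : ℝ)⁻¹ *
      ∑ σ : Equiv.Perm (Fin (m+1)), ∑ idx : Fin (m+1) → Fin n,
        T (idx ∘ σ) * ∏ j, u j (idx j) := by
    rw [contr]
    simp only [dsym, symz, hT]
    exact aux_swap (κ := Equiv.Perm (Fin (m+1))) _
      (fun σ idx => pd ((idx ∘ σ) (Fin.last m)) (fun y => v y ((idx ∘ σ) ∘ Fin.castSucc)) x)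
      (fun idx => ∏ j, u j (idx j))
  have step2 : ∀ σ : Equiv.Perm (Fin (m+1)),
      ∑ idx : Fin (m+1) → Fin n, T (idx ∘ σ) * ∏ j, u j (idx j)
      = ∑ κ : Fin (m+1) → Fin n, T κ * ∏ j, u (σ j) (κ j) := by
    intro σ
    refine (Fintype.sum_equiv (Equiv.arrowCongr σ (Equiv.refl (Fin n)))
      (fun κ => T κ * ∏ j, u (σ j) (κ j))
      (fun idx => T (idx ∘ σ) * ∏ j, u j (idx j)) fun κ => ?_).symm
    have h1 : ((Equiv.arrowCongr σ (Equiv.refl (Fin n))) κ) ∘ σ = κ := by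
      funext j; simp [Equiv.arrowCongr]
    have h2 : ∏ j, u (σ j) (κ j) = ∏ j, u j ((Equiv.arrowCongr σ (Equiv.refl (Fin n)) κ) j) := by
      rw [← Equiv.prod_comp σ (fun j => u j ((Equiv.arrowCongr σ (Equiv.refl (Fin n)) κ) j))]
      refine Finset.prod_congr rfl fun j _ => ?_
      exact (congrArg (fun t => u (σ j) (κ t)) (Equiv.symm_apply_apply σ j)).symm
    dsimp only
    rw [h1, h2]
  have step3 : ∀ σ : Equiv.Perm (Fin (m+1)),
      ∑ κ : Fin (m+1) → Fin n, T κ * ∏ j, u (σ j) (κ j)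
      = ∑ q : Fin m → Fin n,
        (∏ j : Fin m, u (σ j.castSucc) (q j)) * fderiv ℝ (⇑(G q)) x (u (σ (Fin.last m))) := by
    intro σ
    rw [← Equiv.sum_comp (Fin.snocEquiv (fun _ : Fin (m+1) => Fin n))
      (fun κ => T κ * ∏ j, u (σ j) (κ j)), Fintype.sum_prod_type, Finset.sum_comm]
    refine Finset.sum_congr rfl fun q _ => ?_
    have hterm : ∀ k : Fin n,
        (fun κ => T κ * ∏ j, u (σ j) (κ j)) ((Fin.snocEquiv (fun _ : Fin (m+1) => Fin n)) (k, q))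
        = pd k (⇑(G q)) x * ((∏ j : Fin m, u (σ j.castSucc) (q j)) * u (σ (Fin.last m)) k) := by
      intro k
      have hc : (Fin.snoc q k : Fin (m+1) → Fin n) ∘ Fin.castSucc = q := by
        funext j; simp
      have hsn : ((Fin.snocEquiv (fun _ : Fin (m+1) => Fin n)) (k, q))
          = (Fin.snoc q k : Fin (m+1) → Fin n) := rfl
      have hTq : T (Fin.snoc q k : Fin (m+1) → Fin n) = pd k (⇑(G q)) x := by
        simp only [hT, hc, Fin.snoc_last, hG q]
      dsimp only
      rw [hsn, hTq, Fin.prod_univ_castSucc, Fin.snoc_last]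
      rw [show (∏ i : Fin m, u (σ i.castSucc) ((Fin.snoc q k : Fin (m+1) → Fin n) i.castSucc))
            = ∏ j : Fin m, u (σ j.castSucc) (q j) from
          Finset.prod_congr rfl fun i _ => by rw [Fin.snoc_castSucc]]
    refine (Finset.sum_congr rfl fun k _ => hterm k).trans ?_
    rw [← sum_pd_eq_fderiv (⇑(G q)) x (u (σ (Fin.last m))), Finset.mul_sum]
    exact Finset.sum_congr rfl fun k _ => by ring
  rw [step1]
  congr 1
  exact Finset.sum_congr rfl fun σ _ => (step2 σ).trans (step3 σ)

/-- The longitudinal Radon transform of a potential field `f = dv` vanishes: the integral of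
`⟨dv, ω₁^{⊙ℓ₁} ⊙ ⋯ ⊙ ω_{n-1}^{⊙ℓ_{n-1}}⟩` over any hyperplane normal to `ω` is zero, where
`ω₁, …, ω_{n-1}` is an orthonormal basis of `ω^⊥`. -/
theorem stmt12 {n m : ℕ} (v : TF n m) (hS : IsSchwartzTF v) (hsym : IsSymTF v)
    (ω : E n) (hω : ‖ω‖ = 1) (b : Fin (n - 1) → E n) (hb : Orthonormal ℝ b)
    (hbperp : ∀ i, b i ∈ (ℝ ∙ ω)ᗮ)
    (hspan : Submodule.span ℝ (Set.range b) = (ℝ ∙ ω)ᗮ)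
    (p : ℝ) (u : Fin (m + 1) → E n) (hu : ∀ j, ∃ i, u j = b i) :
    hypInt (contr (dsym v) u) ω p = 0 := by
  classical
  choose G hG using hS
  have key : ∀ (q : Fin m → Fin n) (j : Fin (m+1)),
      (∫ y : ((ℝ ∙ ω)ᗮ : Submodule ℝ (E n)), fderiv ℝ (⇑(G q)) (p • ω + ↑y) (u j)) = 0 ∧
      Integrable (fun y : ((ℝ ∙ ω)ᗮ : Submodule ℝ (E n)) =>
        fderiv ℝ (⇑(G q)) (p • ω + ↑y) (u j)) := by
    intro q j
    obtain ⟨i, hi⟩ := hu j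
    have ha : u j ∈ (ℝ ∙ ω)ᗮ := by rw [hi]; exact hbperp i
    obtain ⟨h₂, hcoe, hint⟩ := hyp_deriv_zero (G q) ω p (u j) ha
    refine ⟨hint, ?_⟩
    rw [hcoe]
    exact h₂.integrable
  have hrw : (fun y : ((ℝ ∙ ω)ᗮ : Submodule ℝ (E n)) => contr (dsym v) u (p • ω + ↑y))
      = fun y : ((ℝ ∙ ω)ᗮ : Submodule ℝ (E n)) => ((m+1).factorial : ℝ)⁻¹ *
          ∑ σ : Equiv.Perm (Fin (m+1)), ∑ q : Fin m → Fin n,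
            (∏ j : Fin m, u (σ j.castSucc) (q j)) *
              fderiv ℝ (⇑(G q)) (p • ω + ↑y) (u (σ (Fin.last m))) :=
    funext fun y => contr_dsym_eq v u G hG _
  have hzero : ∀ σ : Equiv.Perm (Fin (m+1)),
      (∫ y : ((ℝ ∙ ω)ᗮ : Submodule ℝ (E n)), ∑ q : Fin m → Fin n,
        (∏ j : Fin m, u (σ j.castSucc) (q j)) *
          fderiv ℝ (⇑(G q)) (p • ω + ↑y) (u (σ (Fin.last m)))) = 0 := by
    intro σ
    rw [integral_finset_sum _ (fun q _ => ((key q (σ (Fin.last m))).2).const_mul _)]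
    refine Finset.sum_eq_zero fun q _ => ?_
    rw [MeasureTheory.integral_const_mul, (key q (σ (Fin.last m))).1, mul_zero]
  rw [hypInt, hrw, MeasureTheory.integral_const_mul,
    integral_finset_sum _ (fun σ _ => integrable_finset_sum _
      (fun q _ => ((key q (σ (Fin.last m))).2).const_mul _)),
    Finset.sum_eq_zero (fun σ _ => hzero σ), mul_zero]

end
end
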